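/- Let T₁ and T₂ be arbitrary 𝒜-trees and let T̄₁ = T₁|(𝒜(T₁) ∩ 𝒜(T₂)) and T̄₂ = T₂|(𝒜(T₁) ∩ 𝒜(T₂)). Then the following assertions are equivalent: (i) T₁ and T₂ are ancestrally compatible; (ii) T₁ and T₂ are locally compatible; (iii) for every A ∈ 𝒜(T₁) ∩ 𝒜(T₂), the smallest member of 𝒞_𝒜(T̄₁) containing A equals the smallest member of 𝒞_𝒜(T̄₂) containing A, and for every X ∈ 𝒞_𝒜(T̄₁) and Y ∈ 𝒞_𝒜(T̄₂), if X ∩ Y ≠ ∅ then X ⊆ Y or Y ⊆ X. -/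

import Mathlib

/-!
Common framework: rooted labeled trees ("𝒜-trees") following Llabrés–Rocha–Rosselló–Valiente.

A `PreTree α V` is the raw data of a directed graph on (a finite subset of) `V` together with
a partial labeling of its nodes by labels in `α`.  The predicate `PreTree.IsATree` asserts that
this data is a finite rooted tree (the root reaches every node by a unique directed path),
that the labeling is injective, and that every leaf is labeled.
-/

structure PreTree (α : Type) (V : Type) where
  nodes : Set V
  arc : V → V → Prop
  label : V → Option α

namespace PreTree

variable {α V W : Type}

/-- There is a directed path from `u` to `v` (possibly trivial). -/
def path (T : PreTree α V) (u v : V) : Prop := Relation.ReflTransGen T.arc u v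

/-- There is a non-trivial directed path (length ≥ 1) from `u` to `v`. -/
def pathNT (T : PreTree α V) (u v : V) : Prop := Relation.TransGen T.arc u v

/-- `𝒜(T)`: the set of labels of all nodes of `T`. -/
def labelSet (T : PreTree α V) : Set α := {a | ∃ v, T.label v = some a}

/-- `𝒜_T(v)`: the cluster of `v`, i.e. the set of labels of all descendants of `v`
(including `v` itself). -/
def cluster (T : PreTree α V) (v : V) : Set α := {a | ∃ w, T.path v w ∧ T.label w = some a}

/-- `𝒞_𝒜(T)`: the cluster representation of `T`. -/
def clusterRep (T : PreTree α V) : Set (Set α) := {C | ∃ v ∈ T.nodes, T.cluster v = C}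

/-- A leaf is a node without children. -/
def IsLeaf (T : PreTree α V) (v : V) : Prop := v ∈ T.nodes ∧ ∀ w, ¬ T.arc v w

/-- `ℒ(T)`: the set of labels of the leaves of `T`. -/
def leafLabels (T : PreTree α V) : Set α := {a | ∃ v, T.IsLeaf v ∧ T.label v = some a}

/-- A node is elementary when it has exactly one child. -/
def IsElementary (T : PreTree α V) (v : V) : Prop := ∃! w, T.arc v w

/-- `T` is an 𝒜-tree: a finite rooted tree (every node reachable from the root by a unique
directed path, which is captured by unique parents, acyclicity and reachability from a root)
with an injective partial labeling such that every leaf is labeled. -/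
structure IsATree (T : PreTree α V) : Prop where
  finite_nodes : T.nodes.Finite
  arc_mem_left : ∀ {u v : V}, T.arc u v → u ∈ T.nodes
  arc_mem_right : ∀ {u v : V}, T.arc u v → v ∈ T.nodes
  parent_unique : ∀ {u v w : V}, T.arc u w → T.arc v w → u = v
  acyclic : ∀ {u v : V}, T.arc u v → ¬ T.path v u
  rooted : T.nodes.Nonempty → ∃ r ∈ T.nodes, ∀ v ∈ T.nodes, T.path r v
  label_mem : ∀ {v : V} {a : α}, T.label v = some a → v ∈ T.nodes
  label_inj : ∀ {u v : V} {a : α}, T.label u = some a → T.label v = some a → u = v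
  leaf_labeled : ∀ v ∈ T.nodes, (∀ w, ¬ T.arc v w) → ∃ a, T.label v = some a

/-- A semi-labeled tree over `𝒜` is an 𝒜-tree all of whose elementary nodes are labeled. -/
def IsSemiLabeled (T : PreTree α V) : Prop :=
  T.IsATree ∧ ∀ v ∈ T.nodes, T.IsElementary v → ∃ a, T.label v = some a

open Classical in
/-- The restriction `T|X`: the subtree of `T` induced on the nodes whose cluster meets `X`,
keeping exactly the labels that belong to `X`. -/
noncomputable def restrict (T : PreTree α V) (X : Set α) : PreTree α V where
  nodes := {v | v ∈ T.nodes ∧ (T.cluster v ∩ X).Nonempty}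
  arc u v := T.arc u v ∧ (T.cluster u ∩ X).Nonempty ∧ (T.cluster v ∩ X).Nonempty
  label v := if (∃ a ∈ X, T.label v = some a) then T.label v else none

/-- A weak topological embedding `f : S → T`: an injective map on nodes which preserves labels
and preserves and reflects directed paths. -/
def IsWTE (S : PreTree α V) (T : PreTree α W) (f : V → W) : Prop :=
  (∀ v ∈ S.nodes, f v ∈ T.nodes) ∧
  (∀ u ∈ S.nodes, ∀ v ∈ S.nodes, f u = f v → u = v) ∧
  (∀ (v : V) (a : α), S.label v = some a → T.label (f v) = some a) ∧
  (∀ u ∈ S.nodes, ∀ v ∈ S.nodes, (S.path u v ↔ T.path (f u) (f v)))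

/-- Two 𝒜-trees are ancestrally compatible when they admit weak topological embeddings into
a same 𝒜-tree. -/
def AncCompat (T₁ : PreTree α V) (T₂ : PreTree α W) : Prop :=
  ∃ (U : Type) (T : PreTree α U), T.IsATree ∧ (∃ f, IsWTE T₁ T f) ∧ (∃ g, IsWTE T₂ T g)

/-- `m` is the most recent common ancestor of `x` and `y` in `T`. -/
def IsMRCA (T : PreTree α V) (x y m : V) : Prop :=
  T.path m x ∧ T.path m y ∧ ∀ n, T.path n x → T.path n y → T.path n m

/-- Local compatibility: condition (C1) on pairs of common labels and condition (C2)
on triples of common labels. -/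
def LocallyCompatible (T₁ : PreTree α V) (T₂ : PreTree α W) : Prop :=
  (∀ (a b : α) (x₁ y₁ : V) (x₂ y₂ : W),
      T₁.label x₁ = some a → T₁.label y₁ = some b →
      T₂.label x₂ = some a → T₂.label y₂ = some b →
      (T₁.path x₁ y₁ ↔ T₂.path x₂ y₂)) ∧
  (∀ (a b c : α) (va₁ vb₁ vc₁ m₁ m₁' : V) (va₂ vb₂ vc₂ m₂ m₂' : W),
      T₁.label va₁ = some a → T₁.label vb₁ = some b → T₁.label vc₁ = some c →
      T₂.label va₂ = some a → T₂.label vb₂ = some b → T₂.label vc₂ = some c →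
      IsMRCA T₁ vb₁ vc₁ m₁ → IsMRCA T₁ va₁ vb₁ m₁' →
      IsMRCA T₂ va₂ vb₂ m₂ → IsMRCA T₂ vb₂ vc₂ m₂' →
      T₁.pathNT m₁ m₁' → ¬ T₂.pathNT m₂ m₂')

/-- `T` ancestrally displays `S`. -/
def Displays (T : PreTree α W) (S : PreTree α V) : Prop :=
  S.labelSet ⊆ T.labelSet ∧
  (∀ (a b : α) (x y : V) (x' y' : W),
      S.label x = some a → S.label y = some b →
      T.label x' = some a → T.label y' = some b →
      (S.path x y ↔ T.path x' y')) ∧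
  S.clusterRep ⊆ (T.restrict S.labelSet).clusterRep

/-- An unlabeled elementary node. -/
def ElemUnlab (T : PreTree α V) (v : V) : Prop := T.label v = none ∧ T.IsElementary v

/-- The semi-labeled tree obtained from `S` by removing its unlabeled elementary nodes and
replacing by single arcs the maximal paths all of whose intermediate nodes are unlabeled
and elementary. -/
def contract (S : PreTree α V) : PreTree α V where
  nodes := {v | v ∈ S.nodes ∧ ¬ ElemUnlab S v}
  arc u v := (u ∈ S.nodes ∧ ¬ ElemUnlab S u) ∧ (v ∈ S.nodes ∧ ¬ ElemUnlab S v) ∧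
    ∃ l : List V, List.Chain' S.arc (u :: (l ++ [v])) ∧ ∀ m ∈ l, ElemUnlab S m
  label := S.label

/-- `X` is the smallest member of the family `R` containing the label `a`. -/
def SmallestContaining (R : Set (Set α)) (a : α) (X : Set α) : Prop :=
  X ∈ R ∧ a ∈ X ∧ ∀ Y ∈ R, a ∈ Y → X ⊆ Y

/-- `m_{ℓ,Y}`: the number of nodes of `T` whose cluster is `Y`. -/
noncomputable def mcount (T : PreTree α V) (Y : Set α) : ℕ :=
  {v | v ∈ T.nodes ∧ T.cluster v = Y}.ncard

/-- `𝒞 = 𝒞_𝒜(T₁) ∪ 𝒞_𝒜(T₂)`. -/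
def joinC (T₁ : PreTree α V) (T₂ : PreTree α W) : Set (Set α) :=
  T₁.clusterRep ∪ T₂.clusterRep

/-- `n_Y = max (m_{1,Y}, m_{2,Y})`. -/
noncomputable def joinN (T₁ : PreTree α V) (T₂ : PreTree α W) (Y : Set α) : ℕ :=
  max (mcount T₁ Y) (mcount T₂ Y)

open Classical in
/-- The join `T_{1,2}` of two 𝒜-trees with the same label set: nodes are the pairs
`w_{Y,j} = (Y, j)` with `Y ∈ 𝒞` and `1 ≤ j ≤ n_Y`, with the chain arcs `(w_{Y,j}, w_{Y,j-1})`
and the arcs `(w_{Y,1}, w_{Z,n_Z})` for `Z ⊊ Y` maximal in `𝒞`, and `w_{Y,1}` labeled `A`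
exactly when `Y = (⋃ {Z ∈ 𝒞 ∣ Z ⊊ Y}) ⊔ {A}`. -/
noncomputable def join (T₁ : PreTree α V) (T₂ : PreTree α W) : PreTree α (Set α × ℕ) where
  nodes := {p | p.1 ∈ joinC T₁ T₂ ∧ 1 ≤ p.2 ∧ p.2 ≤ joinN T₁ T₂ p.1}
  arc p q := p.1 ∈ joinC T₁ T₂ ∧ q.1 ∈ joinC T₁ T₂ ∧
    ((q.1 = p.1 ∧ p.2 = q.2 + 1 ∧ 1 ≤ q.2 ∧ p.2 ≤ joinN T₁ T₂ p.1) ∨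
     (p.2 = 1 ∧ q.1 ⊂ p.1 ∧ q.2 = joinN T₁ T₂ q.1 ∧ 1 ≤ q.2 ∧
       ¬ ∃ Z ∈ joinC T₁ T₂, q.1 ⊂ Z ∧ Z ⊂ p.1))
  label p :=
    if h : p.2 = 1 ∧ p.1 ∈ joinC T₁ T₂ ∧
        ∃ a : α, a ∉ ⋃₀ {Z ∈ joinC T₁ T₂ | Z ⊂ p.1} ∧
          p.1 = (⋃₀ {Z ∈ joinC T₁ T₂ | Z ⊂ p.1}) ∪ {a}
    then some h.2.2.choose else none

/-- The canonical map `f_ℓ : V(T_ℓ) → V(T_{1,2})`, sending the `i`-th node (from the bottom)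
of the chain of nodes of `T` with cluster `Y` to `w_{Y,i}`. -/
noncomputable def joinMap (T : PreTree α V) (v : V) : Set α × ℕ :=
  (T.cluster v, {u | u ∈ T.nodes ∧ T.cluster u = T.cluster v ∧ T.pathNT v u}.ncard + 1)

end PreTree
namespace PreTree

variable {α V W : Type}

section Generic

variable {T : PreTree α V}

lemma path_refl (T : PreTree α V) (v : V) : T.path v v := Relation.ReflTransGen.refl

lemma path_trans {u v w : V} (h : T.path u v) (h' : T.path v w) : T.path u w :=
  Relation.ReflTransGen.trans h h'

lemma arc_path {u v : V} (h : T.arc u v) : T.path u v := Relation.ReflTransGen.single h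

lemma pathNT_path {u v : V} (h : T.pathNT u v) : T.path u v :=
  Relation.TransGen.to_reflTransGen h

lemma path_pathNT {u v : V} (h : T.path u v) (hne : u ≠ v) : T.pathNT u v := by
  rcases (Relation.ReflTransGen.cases_head h) with rfl | ⟨c, hc, hcv⟩
  · exact absurd rfl hne
  · exact Relation.TransGen.head' hc hcv

lemma no_cycle (hT : T.IsATree) {u v : V} (h : T.pathNT u v) (h' : T.path v u) : False := by
  rcases (Relation.TransGen.head'_iff.mp h) with ⟨c, hc, hcv⟩
  exact hT.acyclic hc (path_trans hcv h')

lemma pathNT_irrefl (hT : T.IsATree) {u : V} (h : T.pathNT u u) : False :=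
  no_cycle hT h (path_refl T u)

lemma path_antisymm (hT : T.IsATree) {u v : V} (h : T.path u v) (h' : T.path v u) : u = v := by
  by_contra hne
  exact no_cycle hT (path_pathNT h hne) h'

lemma pathNT_ne (hT : T.IsATree) {u v : V} (h : T.pathNT u v) : u ≠ v := by
  rintro rfl; exact pathNT_irrefl hT h

/-- Ancestors of a common node are comparable. -/
lemma comparable (hT : T.IsATree) {p q v : V} (hp : T.path p v) (hq : T.path q v) :
    T.path p q ∨ T.path q p := by
  induction hp using Relation.ReflTransGen.head_induction_on with
  | refl => exact Or.inr hq
  | head hax hxv ih =>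
    rename_i p x
    rcases ih with h | h
    · exact Or.inl (Relation.ReflTransGen.head hax h)
    · rcases h.cases_tail with rfl | ⟨y, hqy, hyx⟩
      · exact Or.inl (arc_path hax)
      · have : y = p := hT.parent_unique hyx hax
        subst this
        exact Or.inr hqy

lemma mem_of_path_target (hT : T.IsATree) {u v : V} (h : T.path u v) (hv : v ∈ T.nodes) :
    u ∈ T.nodes := by
  rcases h.cases_head with rfl | ⟨c, hc, _⟩
  · exact hv
  · exact hT.arc_mem_left hc

lemma cluster_mono {u v : V} (h : T.path u v) : T.cluster v ⊆ T.cluster u := by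
  rintro a ⟨w, hw, hl⟩
  exact ⟨w, path_trans h hw, hl⟩

lemma mem_cluster_iff (hT : T.IsATree) {w : V} {a : α} (hw : T.label w = some a) (v : V) :
    a ∈ T.cluster v ↔ T.path v w := by
  constructor
  · rintro ⟨w', hw', hl⟩
    rwa [hT.label_inj hl hw] at hw'
  · intro h; exact ⟨w, h, hw⟩

lemma labelSet_finite (hT : T.IsATree) : T.labelSet.Finite := by
  have : T.labelSet ⊆ ⋃ v ∈ T.nodes, {a | T.label v = some a} := by
    rintro a ⟨v, hv⟩
    exact Set.mem_biUnion (hT.label_mem hv) hv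
  refine Set.Finite.subset (Set.Finite.biUnion hT.finite_nodes (fun v _ => ?_)) this
  apply Set.Subsingleton.finite
  intro a ha b hb
  simp only [Set.mem_setOf_eq] at ha hb
  rw [ha] at hb; exact (Option.some.injEq _ _).mp hb

lemma cluster_subset_labelSet (T : PreTree α V) (v : V) : T.cluster v ⊆ T.labelSet := by
  rintro a ⟨w, _, hl⟩; exact ⟨w, hl⟩

/-- Existence of most recent common ancestors. -/
lemma mrca_exists (hT : T.IsATree) {x y n : V} (hx : x ∈ T.nodes) (hnx : T.path n x)
    (hny : T.path n y) : ∃ m, T.IsMRCA x y m := by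
  classical
  set A : Set V := {p | T.path p x ∧ T.path p y} with hA
  have hAsub : A ⊆ T.nodes := fun p hp => mem_of_path_target hT hp.1 hx
  have hAfin : A.Finite := hT.finite_nodes.subset hAsub
  have hAne : A.Nonempty := ⟨n, hnx, hny⟩
  have hanc : ∀ p ∈ A, {q | T.path q p}.Finite := by
    intro p hp
    exact hT.finite_nodes.subset (fun q hq => mem_of_path_target hT hq (hAsub hp))
  obtain ⟨m, hmA, hmax⟩ := hAfin.toFinset.exists_max_image (fun p => {q | T.path q p}.ncard)
    (by rwa [← Set.Finite.toFinset_nonempty hAfin] at hAne; )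
  rw [Set.Finite.mem_toFinset] at hmA
  refine ⟨m, hmA.1, hmA.2, ?_⟩
  intro p hpx hpy
  have hpA : p ∈ A := ⟨hpx, hpy⟩
  rcases comparable hT hmA.1 hpx with h | h
  · -- path m p : show anc m ⊊ anc p unless m = p
    by_cases hmp : m = p
    · exact hmp ▸ path_refl T p
    · exfalso
      have hsub : {q | T.path q m} ⊂ {q | T.path q p} := by
        constructor
        · intro q hq; exact path_trans hq h
        · intro hcon
          exact hmp (path_antisymm hT h (hcon (path_refl T p)))
      have := Set.ncard_lt_ncard hsub (hanc p hpA)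
      have h2 := hmax p (by rwa [Set.Finite.mem_toFinset])
      omega
  · exact h

end Generic

end PreTree
namespace PreTree

variable {α V W : Type}

section Chain

variable {T : PreTree α V}

lemma comparable_of_mem_cluster (hT : T.IsATree) {u v : V} {a : α}
    (hu : a ∈ T.cluster u) (hv : a ∈ T.cluster v) : T.path u v ∨ T.path v u := by
  obtain ⟨w, hw, hl⟩ := hu
  obtain ⟨w', hw', hl'⟩ := hv
  rw [hT.label_inj hl' hl] at hw'
  exact comparable hT hw hw'

/-- The index of a node within its chain of equal-cluster nodes. -/
noncomputable def chainIdx (T : PreTree α V) (v : V) : ℕ :=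
  {u | u ∈ T.nodes ∧ T.cluster u = T.cluster v ∧ T.pathNT v u}.ncard + 1

lemma descSet_finite (hT : T.IsATree) (v : V) :
    {u | u ∈ T.nodes ∧ T.cluster u = T.cluster v ∧ T.pathNT v u}.Finite :=
  hT.finite_nodes.subset (fun u hu => hu.1)

lemma chainIdx_pos (T : PreTree α V) (v : V) : 1 ≤ T.chainIdx v := Nat.le_add_left 1 _

lemma chainIdx_lt (hT : T.IsATree) {u v : V} (hu : u ∈ T.nodes)
    (hc : T.cluster u = T.cluster v) (hp : T.pathNT v u) : T.chainIdx u < T.chainIdx v := by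
  have hsub : insert u {w | w ∈ T.nodes ∧ T.cluster w = T.cluster u ∧ T.pathNT u w}
      ⊆ {w | w ∈ T.nodes ∧ T.cluster w = T.cluster v ∧ T.pathNT v w} := by
    rintro w (rfl | ⟨hw1, hw2, hw3⟩)
    · exact ⟨hu, hc, hp⟩
    · exact ⟨hw1, hw2.trans hc, hp.trans hw3⟩
  have hnotmem : u ∉ {w | w ∈ T.nodes ∧ T.cluster w = T.cluster u ∧ T.pathNT u w} := by
    rintro ⟨-, -, h3⟩; exact pathNT_irrefl hT h3
  have h1 : {w | w ∈ T.nodes ∧ T.cluster w = T.cluster u ∧ T.pathNT u w}.ncard + 1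
      ≤ {w | w ∈ T.nodes ∧ T.cluster w = T.cluster v ∧ T.pathNT v w}.ncard := by
    rw [← Set.ncard_insert_of_notMem hnotmem (descSet_finite hT u)]
    exact Set.ncard_le_ncard hsub (descSet_finite hT v)
  simp only [chainIdx]
  omega

lemma chainIdx_inj (hT : T.IsATree) {u v : V} (hu : u ∈ T.nodes) (hv : v ∈ T.nodes)
    (hc : T.cluster u = T.cluster v) (hne : (T.cluster v).Nonempty)
    (hi : T.chainIdx u = T.chainIdx v) : u = v := by
  obtain ⟨a, ha⟩ := hne
  rcases comparable_of_mem_cluster hT (hc ▸ ha) ha with h | h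
  · by_contra hne'
    have := chainIdx_lt hT hv hc.symm (path_pathNT h hne')
    omega
  · by_contra hne'
    have := chainIdx_lt hT hu hc (path_pathNT h (Ne.symm hne'))
    omega

lemma chainIdx_le_mcount (hT : T.IsATree) {v : V} (hv : v ∈ T.nodes) :
    T.chainIdx v ≤ mcount T (T.cluster v) := by
  have hsub : insert v {w | w ∈ T.nodes ∧ T.cluster w = T.cluster v ∧ T.pathNT v w}
      ⊆ {w | w ∈ T.nodes ∧ T.cluster w = T.cluster v} := by
    rintro w (rfl | ⟨hw1, hw2, -⟩)
    · exact ⟨hv, rfl⟩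
    · exact ⟨hw1, hw2⟩
  have hnotmem : v ∉ {w | w ∈ T.nodes ∧ T.cluster w = T.cluster v ∧ T.pathNT v w} := by
    rintro ⟨-, -, h3⟩; exact pathNT_irrefl hT h3
  have hfin : {w | w ∈ T.nodes ∧ T.cluster w = T.cluster v}.Finite :=
    hT.finite_nodes.subset (fun u hu => hu.1)
  have := Set.ncard_le_ncard hsub hfin
  rw [Set.ncard_insert_of_notMem hnotmem (descSet_finite hT v)] at this
  simpa [chainIdx, mcount] using this

lemma mcount_class_finite (hT : T.IsATree) (Y : Set α) :
    {w | w ∈ T.nodes ∧ T.cluster w = Y}.Finite :=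
  hT.finite_nodes.subset (fun u hu => hu.1)

lemma chainIdx_surj (hT : T.IsATree) {Y : Set α} (hYne : Y.Nonempty) {j : ℕ}
    (h1 : 1 ≤ j) (h2 : j ≤ mcount T Y) :
    ∃ v, v ∈ T.nodes ∧ T.cluster v = Y ∧ T.chainIdx v = j := by
  classical
  have hfin := mcount_class_finite hT Y
  set F := hfin.toFinset with hF
  have hcard : F.card = mcount T Y := by
    rw [hF]
    simp only [mcount]
    exact (Set.ncard_eq_toFinset_card _ hfin).symm
  have himg : F.image T.chainIdx ⊆ Finset.Icc 1 (mcount T Y) := by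
    intro j hj
    rw [Finset.mem_image] at hj
    obtain ⟨v, hv, rfl⟩ := hj
    rw [Set.Finite.mem_toFinset] at hv
    refine Finset.mem_Icc.mpr ⟨chainIdx_pos T v, ?_⟩
    have := chainIdx_le_mcount hT hv.1
    rwa [hv.2] at this
  have hinj : Set.InjOn T.chainIdx F := by
    intro u hu v hv hi
    rw [Finset.mem_coe, Set.Finite.mem_toFinset] at hu hv
    exact chainIdx_inj hT hu.1 hv.1 (hu.2.trans hv.2.symm) (hv.2 ▸ hYne) hi
  have hcard2 : (F.image T.chainIdx).card = mcount T Y := by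
    rw [Finset.card_image_of_injOn hinj, hcard]
  have heq : F.image T.chainIdx = Finset.Icc 1 (mcount T Y) := by
    apply Finset.eq_of_subset_of_card_le himg
    rw [hcard2, Nat.card_Icc]
    omega
  have hjmem : j ∈ F.image T.chainIdx := by
    rw [heq, Finset.mem_Icc]; omega
  rw [Finset.mem_image] at hjmem
  obtain ⟨v, hv, hvj⟩ := hjmem
  rw [Set.Finite.mem_toFinset] at hv
  exact ⟨v, hv.1, hv.2, hvj⟩

lemma labeled_chainIdx_one (hT : T.IsATree) {v : V} {a : α} (hl : T.label v = some a) :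
    T.chainIdx v = 1 := by
  have : {u | u ∈ T.nodes ∧ T.cluster u = T.cluster v ∧ T.pathNT v u} = ∅ := by
    ext u
    simp only [Set.mem_setOf_eq, Set.mem_empty_iff_false, iff_false, not_and]
    rintro hu hc hp
    have hav : a ∈ T.cluster v := ⟨v, path_refl T v, hl⟩
    have hau : a ∈ T.cluster u := hc ▸ hav
    have := (mem_cluster_iff hT hl u).mp hau
    exact no_cycle hT hp this
  simp [chainIdx, this]

lemma mcount_pos_iff (hT : T.IsATree) {Y : Set α} :
    1 ≤ mcount T Y ↔ ∃ v, v ∈ T.nodes ∧ T.cluster v = Y := by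
  rw [mcount]
  constructor
  · intro h
    have : {v | v ∈ T.nodes ∧ T.cluster v = Y}.Nonempty := by
      rw [← Set.ncard_pos (mcount_class_finite hT Y)]; omega
    exact this
  · intro ⟨v, hv⟩
    have : {v | v ∈ T.nodes ∧ T.cluster v = Y}.Nonempty := ⟨v, hv⟩
    rw [← Set.ncard_pos (mcount_class_finite hT Y)] at this; omega

lemma mem_clusterRep_iff {Y : Set α} : Y ∈ T.clusterRep ↔ ∃ v, v ∈ T.nodes ∧ T.cluster v = Y :=
  by simp [clusterRep]

lemma clusterRep_finite (hT : T.IsATree) : T.clusterRep.Finite := by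
  have : T.clusterRep ⊆ T.cluster '' T.nodes := by
    rintro Y ⟨v, hv, rfl⟩; exact ⟨v, hv, rfl⟩
  exact (hT.finite_nodes.image _).subset this

end Chain

end PreTree
namespace PreTree

variable {α V W : Type}

section Restrict

variable {T : PreTree α V} {X : Set α}

lemma restrict_nodes_iff {v : V} :
    v ∈ (T.restrict X).nodes ↔ v ∈ T.nodes ∧ (T.cluster v ∩ X).Nonempty := Iff.rfl

lemma restrict_arc_iff {u v : V} :
    (T.restrict X).arc u v ↔
      T.arc u v ∧ (T.cluster u ∩ X).Nonempty ∧ (T.cluster v ∩ X).Nonempty := Iff.rfl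

lemma restrict_label_iff {v : V} {a : α} :
    (T.restrict X).label v = some a ↔ a ∈ X ∧ T.label v = some a := by
  classical
  simp only [restrict]
  split
  · rename_i h
    obtain ⟨b, hb, hbl⟩ := h
    constructor
    · intro hl
      rw [hl] at hbl
      have : b = a := (Option.some.inj hbl).symm
      subst this
      exact ⟨hb, hl⟩
    · exact fun h => h.2
  · rename_i h
    constructor
    · intro hc; exact absurd hc (by simp)
    · rintro ⟨ha, hl⟩; exact absurd ⟨a, ha, hl⟩ h

lemma restrict_path {u v : V} (h : (T.restrict X).path u v) : T.path u v := by
  induction h with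
  | refl => exact path_refl T u
  | tail _ harc ih => exact Relation.ReflTransGen.tail ih harc.1

lemma path_restrict {u v : V} (h : T.path u v) (hv : (T.cluster v ∩ X).Nonempty) :
    (T.restrict X).path u v := by
  induction h using Relation.ReflTransGen.head_induction_on with
  | refl => exact path_refl _ v
  | head harc hpath ih =>
    rename_i p x
    have hx : (T.cluster x ∩ X).Nonempty := by
      obtain ⟨a, ha, haX⟩ := hv
      exact ⟨a, cluster_mono hpath ha, haX⟩
    have hp : (T.cluster p ∩ X).Nonempty := by
      obtain ⟨a, ha, haX⟩ := hx
      exact ⟨a, cluster_mono (arc_path harc) ha, haX⟩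
    exact Relation.ReflTransGen.head ⟨harc, hp, hx⟩ ih

lemma restrict_cluster (v : V) : (T.restrict X).cluster v = T.cluster v ∩ X := by
  ext a
  constructor
  · rintro ⟨w, hw, hl⟩
    obtain ⟨haX, hlw⟩ := restrict_label_iff.mp hl
    exact ⟨⟨w, restrict_path hw, hlw⟩, haX⟩
  · rintro ⟨⟨w, hw, hl⟩, haX⟩
    have hcw : (T.cluster w ∩ X).Nonempty := ⟨a, ⟨w, path_refl T w, hl⟩, haX⟩
    exact ⟨w, path_restrict hw hcw, restrict_label_iff.mpr ⟨haX, hl⟩⟩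

lemma restrict_cluster_subset (v : V) : (T.restrict X).cluster v ⊆ X := by
  rw [restrict_cluster]; exact Set.inter_subset_right

lemma restrict_cluster_nonempty {v : V} (hv : v ∈ (T.restrict X).nodes) :
    ((T.restrict X).cluster v).Nonempty := by
  rw [restrict_cluster]; exact hv.2

lemma restrict_isATree (hT : T.IsATree) : (T.restrict X).IsATree := by
  constructor
  · exact hT.finite_nodes.subset (fun v hv => hv.1)
  · intro u v h; exact ⟨hT.arc_mem_left h.1, h.2.1⟩
  · intro u v h; exact ⟨hT.arc_mem_right h.1, h.2.2⟩
  · intro u v w hu hv; exact hT.parent_unique hu.1 hv.1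
  · intro u v h hp; exact hT.acyclic h.1 (restrict_path hp)
  · rintro ⟨v, hv⟩
    obtain ⟨r, hr, hroot⟩ := hT.rooted ⟨v, hv.1⟩
    have hrR : r ∈ (T.restrict X).nodes := by
      refine ⟨hr, ?_⟩
      obtain ⟨a, ha, haX⟩ := hv.2
      exact ⟨a, cluster_mono (hroot v hv.1) ha, haX⟩
    exact ⟨r, hrR, fun z hz => path_restrict (hroot z hz.1) hz.2⟩
  · intro v a hl
    obtain ⟨haX, hlv⟩ := restrict_label_iff.mp hl
    exact ⟨hT.label_mem hlv, ⟨a, ⟨v, path_refl T v, hlv⟩, haX⟩⟩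
  · intro u v a hu hv
    exact hT.label_inj (restrict_label_iff.mp hu).2 (restrict_label_iff.mp hv).2
  · intro v hv hleaf
    obtain ⟨a, ha, haX⟩ := hv.2
    obtain ⟨w, hw, hl⟩ := ha
    rcases hw.cases_head with rfl | ⟨x, hx, hxw⟩
    · exact ⟨a, restrict_label_iff.mpr ⟨haX, hl⟩⟩
    · exfalso
      refine hleaf x ⟨hx, hv.2, ⟨a, ⟨w, hxw, hl⟩, haX⟩⟩

lemma restrict_labelSet : (T.restrict X).labelSet = T.labelSet ∩ X := by
  ext a
  constructor
  · rintro ⟨v, hv⟩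
    obtain ⟨haX, hl⟩ := restrict_label_iff.mp hv
    exact ⟨⟨v, hl⟩, haX⟩
  · rintro ⟨⟨v, hv⟩, haX⟩
    exact ⟨v, restrict_label_iff.mpr ⟨haX, hv⟩⟩

lemma labeled_smallest (hT : T.IsATree) {v : V} {a : α} (haX : a ∈ X)
    (hl : T.label v = some a) :
    SmallestContaining (T.restrict X).clusterRep a ((T.restrict X).cluster v) := by
  have hR := restrict_isATree (X := X) hT
  have hlv : (T.restrict X).label v = some a := restrict_label_iff.mpr ⟨haX, hl⟩
  have hvR : v ∈ (T.restrict X).nodes := hR.label_mem hlv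
  refine ⟨mem_clusterRep_iff.mpr ⟨v, hvR, rfl⟩, ⟨v, path_refl _ v, hlv⟩, ?_⟩
  rintro Y ⟨u, hu, rfl⟩ haY
  exact cluster_mono ((mem_cluster_iff hR hlv u).mp haY)

lemma smallest_unique {R : Set (Set α)} {a : α} {X₁ X₂ : Set α}
    (h1 : SmallestContaining R a X₁) (h2 : SmallestContaining R a X₂) : X₁ = X₂ :=
  Set.Subset.antisymm (h1.2.2 X₂ h2.1 h2.2.1) (h2.2.2 X₁ h1.1 h1.2.1)

end Restrict

end PreTree
namespace PreTree

variable {α V W : Type}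

section Parts23

variable {T₁ : PreTree α V} {T₂ : PreTree α W}

lemma anc_to_loc (h₁ : T₁.IsATree) (h₂ : T₂.IsATree) (h : AncCompat T₁ T₂) :
    LocallyCompatible T₁ T₂ := by
  obtain ⟨U, T, hT, ⟨f, hfn, hfi, hfl, hfp⟩, ⟨g, hgn, hgi, hgl, hgp⟩⟩ := h
  constructor
  · intro a b x₁ y₁ x₂ y₂ hx₁ hy₁ hx₂ hy₂
    have hx₁m := h₁.label_mem hx₁
    have hy₁m := h₁.label_mem hy₁
    have hx₂m := h₂.label_mem hx₂
    have hy₂m := h₂.label_mem hy₂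
    have hfx : f x₁ = g x₂ := hT.label_inj (hfl x₁ a hx₁) (hgl x₂ a hx₂)
    have hfy : f y₁ = g y₂ := hT.label_inj (hfl y₁ b hy₁) (hgl y₂ b hy₂)
    rw [hfp x₁ hx₁m y₁ hy₁m, hfx, hfy, ← hgp x₂ hx₂m y₂ hy₂m]
  · intro a b c va₁ vb₁ vc₁ m₁ m₁' va₂ vb₂ vc₂ m₂ m₂' ha₁ hb₁ hc₁ ha₂ hb₂ hc₂
      hm₁ hm₁' hm₂ hm₂' hNT hNT₂
    have hva₁ := h₁.label_mem ha₁
    have hvb₁ := h₁.label_mem hb₁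
    have hvc₁ := h₁.label_mem hc₁
    have hva₂ := h₂.label_mem ha₂
    have hvb₂ := h₂.label_mem hb₂
    have hvc₂ := h₂.label_mem hc₂
    have hm₁m : m₁ ∈ T₁.nodes := mem_of_path_target h₁ hm₁.1 hvb₁
    have hm₁'m : m₁' ∈ T₁.nodes := mem_of_path_target h₁ hm₁'.1 hva₁
    have hm₂m : m₂ ∈ T₂.nodes := mem_of_path_target h₂ hm₂.1 hva₂
    have hm₂'m : m₂' ∈ T₂.nodes := mem_of_path_target h₂ hm₂'.1 hvb₂
    have hva : f va₁ = g va₂ := hT.label_inj (hfl va₁ a ha₁) (hgl va₂ a ha₂)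
    have hvb : f vb₁ = g vb₂ := hT.label_inj (hfl vb₁ b hb₁) (hgl vb₂ b hb₂)
    have hvc : f vc₁ = g vc₂ := hT.label_inj (hfl vc₁ c hc₁) (hgl vc₂ c hc₂)
    have hPvb : T.path (f m₁') (f vb₁) := (hfp m₁' hm₁'m vb₁ hvb₁).mp hm₁'.2.1
    have hQvb : T.path (g m₂') (f vb₁) := by
      rw [hvb]; exact (hgp m₂' hm₂'m vb₂ hvb₂).mp hm₂'.1
    rcases comparable hT hPvb hQvb with hPQ | hQP
    · -- path (f m₁') (g m₂') : m₁' is a common ancestor of b,c in T₁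
      have hQvc : T.path (g m₂') (g vc₂) := (hgp m₂' hm₂'m vc₂ hvc₂).mp hm₂'.2.1
      have : T.path (f m₁') (f vc₁) := by
        rw [hvc]; exact path_trans hPQ hQvc
      have hc1 : T₁.path m₁' vc₁ := (hfp m₁' hm₁'m vc₁ hvc₁).mpr this
      have : T₁.path m₁' m₁ := hm₁.2.2 m₁' hm₁'.2.1 hc1
      exact no_cycle h₁ hNT this
    · -- path (g m₂') (f m₁') : m₂' is a common ancestor of a,b in T₂
      have hPva : T.path (f m₁') (f va₁) := (hfp m₁' hm₁'m va₁ hva₁).mp hm₁'.1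
      have : T.path (g m₂') (g va₂) := by
        rw [← hva]; exact path_trans hQP hPva
      have ha2 : T₂.path m₂' va₂ := (hgp m₂' hm₂'m va₂ hva₂).mpr this
      have : T₂.path m₂' m₂ := hm₂.2.2 m₂' ha2 hm₂'.1
      exact no_cycle h₂ hNT₂ this

lemma loc_to_iii (h₁ : T₁.IsATree) (h₂ : T₂.IsATree) (h : LocallyCompatible T₁ T₂) :
    ((∀ a ∈ T₁.labelSet ∩ T₂.labelSet, ∃ X : Set α,
        SmallestContaining (T₁.restrict (T₁.labelSet ∩ T₂.labelSet)).clusterRep a X ∧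
        SmallestContaining (T₂.restrict (T₁.labelSet ∩ T₂.labelSet)).clusterRep a X) ∧
     (∀ X ∈ (T₁.restrict (T₁.labelSet ∩ T₂.labelSet)).clusterRep,
        ∀ Y ∈ (T₂.restrict (T₁.labelSet ∩ T₂.labelSet)).clusterRep,
        (X ∩ Y).Nonempty → X ⊆ Y ∨ Y ⊆ X)) := by
  set 𝒳 : Set α := T₁.labelSet ∩ T₂.labelSet with h𝒳
  obtain ⟨hC1, hC2⟩ := h
  constructor
  · intro a ha
    have ha' : a ∈ T₁.labelSet ∩ T₂.labelSet := h𝒳 ▸ ha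
    obtain ⟨v, hv⟩ := ha'.1
    obtain ⟨w, hw⟩ := ha'.2
    refine ⟨(T₁.restrict 𝒳).cluster v, labeled_smallest h₁ ha hv, ?_⟩
    have hkey : (T₁.restrict 𝒳).cluster v = (T₂.restrict 𝒳).cluster w := by
      rw [restrict_cluster, restrict_cluster]
      ext b
      simp only [Set.mem_inter_iff, and_congr_left_iff]
      intro hbX
      obtain ⟨vb, hvb⟩ := hbX.1
      obtain ⟨wb, hwb⟩ := hbX.2
      rw [mem_cluster_iff h₁ hvb, mem_cluster_iff h₂ hwb]
      exact hC1 a b v vb w wb hv hvb hw hwb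
    rw [hkey]
    exact labeled_smallest h₂ ha hw
  · rintro Xc hXc Yc hYc ⟨b, hbX, hbY⟩
    by_contra hcon
    push_neg at hcon
    obtain ⟨hXY, hYX⟩ := hcon
    obtain ⟨a, haX, haY⟩ := Set.not_subset.mp hXY
    obtain ⟨c, hcY, hcX⟩ := Set.not_subset.mp hYX
    obtain ⟨u, hu, rfl⟩ := mem_clusterRep_iff.mp hXc
    obtain ⟨v', hv', rfl⟩ := mem_clusterRep_iff.mp hYc
    -- all of a b c are in 𝒳
    have haXX : a ∈ 𝒳 := restrict_cluster_subset u haX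
    have hbXX : b ∈ 𝒳 := restrict_cluster_subset u hbX
    have hcXX : c ∈ 𝒳 := restrict_cluster_subset v' hcY
    obtain ⟨va₁, hva₁⟩ := haXX.1
    obtain ⟨vb₁, hvb₁⟩ := hbXX.1
    obtain ⟨vc₁, hvc₁⟩ := hcXX.1
    obtain ⟨va₂, hva₂⟩ := haXX.2
    obtain ⟨vb₂, hvb₂⟩ := hbXX.2
    obtain ⟨vc₂, hvc₂⟩ := hcXX.2
    have hmva₁ := h₁.label_mem hva₁
    have hmvb₁ := h₁.label_mem hvb₁
    have hmvc₁ := h₁.label_mem hvc₁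
    have hmva₂ := h₂.label_mem hva₂
    have hmvb₂ := h₂.label_mem hvb₂
    have hmvc₂ := h₂.label_mem hvc₂
    rw [restrict_cluster] at haX hbX hcX hcY hbY haY
    -- translate memberships to paths
    have hua : T₁.path u va₁ := (mem_cluster_iff h₁ hva₁ u).mp haX.1
    have hub : T₁.path u vb₁ := (mem_cluster_iff h₁ hvb₁ u).mp hbX.1
    have huc : ¬ T₁.path u vc₁ := by
      intro hp
      exact hcX ⟨(mem_cluster_iff h₁ hvc₁ u).mpr hp, hcXX⟩
    have hvb' : T₂.path v' vb₂ := (mem_cluster_iff h₂ hvb₂ v').mp hbY.1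
    have hvc' : T₂.path v' vc₂ := (mem_cluster_iff h₂ hvc₂ v').mp hcY.1
    have hva' : ¬ T₂.path v' va₂ := by
      intro hp
      exact haY ⟨(mem_cluster_iff h₂ hva₂ v').mpr hp, haXX⟩
    -- mrcas in T₁
    obtain ⟨r₁, hr₁, hroot₁⟩ := h₁.rooted ⟨u, hu.1⟩
    obtain ⟨m₁, hm₁⟩ := mrca_exists h₁ hmvb₁ (hroot₁ vb₁ hmvb₁) (hroot₁ vc₁ hmvc₁)
    obtain ⟨m₁', hm₁'⟩ := mrca_exists h₁ hmva₁ hua hub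
    obtain ⟨r₂, hr₂, hroot₂⟩ := h₂.rooted ⟨v', hv'.1⟩
    obtain ⟨m₂, hm₂⟩ := mrca_exists h₂ hmva₂ (hroot₂ va₂ hmva₂) (hroot₂ vb₂ hmvb₂)
    obtain ⟨m₂', hm₂'⟩ := mrca_exists h₂ hmvb₂ hvb' hvc'
    -- pathNT m₁ m₁' in T₁
    have hum₁' : T₁.path u m₁' := hm₁'.2.2 u hua hub
    have hm₁u : T₁.path m₁ u := by
      rcases comparable h₁ hm₁.1 hub with h' | h'
      · exact h'
      · exact absurd (path_trans h' hm₁.2.1) huc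
    have hNT₁ : T₁.pathNT m₁ m₁' := by
      refine path_pathNT (path_trans hm₁u hum₁') ?_
      rintro rfl
      have : u = m₁ := path_antisymm h₁ hum₁' hm₁u
      exact huc (this ▸ hm₁.2.1)
    -- pathNT m₂ m₂' in T₂
    have hvm₂' : T₂.path v' m₂' := hm₂'.2.2 v' hvb' hvc'
    have hm₂v : T₂.path m₂ v' := by
      rcases comparable h₂ hm₂.2.1 hvb' with h' | h'
      · exact h'
      · exact absurd (path_trans h' hm₂.1) hva'
    have hNT₂ : T₂.pathNT m₂ m₂' := by
      refine path_pathNT (path_trans hm₂v hvm₂') ?_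
      rintro rfl
      have : v' = m₂ := path_antisymm h₂ hvm₂' hm₂v
      exact hva' (this ▸ hm₂.1)
    exact hC2 a b c va₁ vb₁ vc₁ m₁ m₁' va₂ vb₂ vc₂ m₂ m₂' hva₁ hvb₁ hvc₁ hva₂ hvb₂ hvc₂
      hm₁ hm₁' hm₂ hm₂' hNT₁ hNT₂

end Parts23

end PreTree
namespace PreTree

section Glue

variable {α V W : Type}

variable (T₁ : PreTree α V) (T₂ : PreTree α W)

/-- The common label set. -/
def com : Set α := T₁.labelSet ∩ T₂.labelSet

/-- The restriction of `T₁` to the common label set. -/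
noncomputable def R1 : PreTree α V := T₁.restrict (com T₁ T₂)

/-- The restriction of `T₂` to the common label set. -/
noncomputable def R2 : PreTree α W := T₂.restrict (com T₁ T₂)

/-- A node of `T₂` carrying a common label. -/
def Merged (w : W) : Prop :=
  ∃ (v : V) (b : α), T₁.label v = some b ∧ T₂.label w = some b ∧ b ∈ com T₁ T₂

/-- The joint cluster representation. -/
def CC : Set (Set α) := (R1 T₁ T₂).clusterRep ∪ (R2 T₁ T₂).clusterRep

/-- Nodes that survive in the restrictions (the `T₂`-representative of a merged
pair being dropped). -/
def Kept : V ⊕ W → Prop :=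
  Sum.elim (· ∈ (R1 T₁ T₂).nodes) (fun w => w ∈ (R2 T₁ T₂).nodes ∧ ¬ Merged T₁ T₂ w)

/-- Nodes whose cluster misses the common label set. -/
def Rem : V ⊕ W → Prop :=
  Sum.elim (fun v => v ∈ T₁.nodes ∧ v ∉ (R1 T₁ T₂).nodes)
    (fun w => w ∈ T₂.nodes ∧ w ∉ (R2 T₁ T₂).nodes)

/-- The (restricted) cluster of a node. -/
noncomputable def clus : V ⊕ W → Set α := Sum.elim (R1 T₁ T₂).cluster (R2 T₁ T₂).cluster

noncomputable def k1 (Y : Set α) : ℕ := mcount (R1 T₁ T₂) Y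
noncomputable def k2 (Y : Set α) : ℕ := mcount (R2 T₁ T₂) Y

/-- Which clusters contain a merged node. -/
def mrg (Y : Set α) : Prop :=
  ∃ w, w ∈ (R2 T₁ T₂).nodes ∧ Merged T₁ T₂ w ∧ (R2 T₁ T₂).cluster w = Y

open Classical in
noncomputable def mnum (Y : Set α) : ℕ := if mrg T₁ T₂ Y then 1 else 0

/-- Global position of a kept node within its chain of equal-cluster nodes. -/
noncomputable def gpos : V ⊕ W → ℕ :=
  Sum.elim (fun v => (R1 T₁ T₂).chainIdx v)
    (fun w => (R2 T₁ T₂).chainIdx w + k1 T₁ T₂ ((R2 T₁ T₂).cluster w)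
        - mnum T₁ T₂ ((R2 T₁ T₂).cluster w))

noncomputable def gtop (Y : Set α) : ℕ := k1 T₁ T₂ Y + k2 T₁ T₂ Y - mnum T₁ T₂ Y

open Classical in
/-- The embedding of `T₂`-nodes into the glued tree. -/
noncomputable def emb2 (w : W) : V ⊕ W :=
  if h : Merged T₁ T₂ w then Sum.inl h.choose else Sum.inr w

open Classical in
/-- The common supertree of `T₁` and `T₂`. -/
noncomputable def glueTree : PreTree α (V ⊕ W) where
  nodes := Sum.inl '' T₁.nodes ∪ Sum.inr '' {w | w ∈ T₂.nodes ∧ ¬ Merged T₁ T₂ w}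
  arc x y :=
    (Kept T₁ T₂ x ∧ Kept T₁ T₂ y ∧
      ((clus T₁ T₂ x = clus T₁ T₂ y ∧ gpos T₁ T₂ x = gpos T₁ T₂ y + 1) ∨
       (gpos T₁ T₂ x = 1 ∧ clus T₁ T₂ y ⊂ clus T₁ T₂ x ∧
        gpos T₁ T₂ y = gtop T₁ T₂ (clus T₁ T₂ y) ∧
        ¬ ∃ Z ∈ CC T₁ T₂, clus T₁ T₂ y ⊂ Z ∧ Z ⊂ clus T₁ T₂ x)))
    ∨ (∃ v v', x = Sum.inl v ∧ y = Sum.inl v' ∧ T₁.arc v v' ∧ v' ∉ (R1 T₁ T₂).nodes)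
    ∨ (∃ w w', x = emb2 T₁ T₂ w ∧ y = Sum.inr w' ∧ T₂.arc w w' ∧ w' ∉ (R2 T₁ T₂).nodes)
  label := Sum.elim T₁.label (fun w => if Merged T₁ T₂ w then none else T₂.label w)

variable {T₁ T₂}

section Basic

lemma hR1 (h₁ : T₁.IsATree) : (R1 T₁ T₂).IsATree := restrict_isATree h₁
lemma hR2 (h₂ : T₂.IsATree) : (R2 T₁ T₂).IsATree := restrict_isATree h₂

lemma merged_mem (h₂ : T₂.IsATree) {w : W} (hw : Merged T₁ T₂ w) : w ∈ (R2 T₁ T₂).nodes := by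
  obtain ⟨v, b, hv, hwl, hb⟩ := hw
  exact (restrict_isATree h₂).label_mem (restrict_label_iff.mpr ⟨hb, hwl⟩)

lemma merged_idx_one (h₂ : T₂.IsATree) {w : W} (hw : Merged T₁ T₂ w) : (R2 T₁ T₂).chainIdx w = 1 := by
  obtain ⟨v, b, hv, hwl, hb⟩ := hw
  exact labeled_chainIdx_one (restrict_isATree h₂) (restrict_label_iff.mpr ⟨hb, hwl⟩)

lemma kept_mem_nodes {x : V ⊕ W} (hx : Kept T₁ T₂ x) : x ∈ (glueTree T₁ T₂).nodes := by
  cases x with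
  | inl v => exact Or.inl ⟨v, hx.1, rfl⟩
  | inr w => exact Or.inr ⟨w, ⟨hx.1.1, hx.2⟩, rfl⟩

lemma rem_mem_nodes (h₂ : T₂.IsATree) {x : V ⊕ W} (hx : Rem T₁ T₂ x) :
    x ∈ (glueTree T₁ T₂).nodes := by
  cases x with
  | inl v => exact Or.inl ⟨v, hx.1, rfl⟩
  | inr w =>
    refine Or.inr ⟨w, ⟨hx.1, fun hm => hx.2 (merged_mem h₂ hm)⟩, rfl⟩

lemma kept_not_rem {x : V ⊕ W} (hk : Kept T₁ T₂ x) (hr : Rem T₁ T₂ x) : False := by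
  cases x with
  | inl v => exact hr.2 hk
  | inr w => exact hr.2 hk.1

lemma mem_nodes_cases {x : V ⊕ W} (hx : x ∈ (glueTree T₁ T₂).nodes) :
    Kept T₁ T₂ x ∨ Rem T₁ T₂ x := by
  classical
  rcases hx with ⟨v, hv, rfl⟩ | ⟨w, hw, rfl⟩
  · by_cases h : v ∈ (R1 T₁ T₂).nodes
    · exact Or.inl h
    · exact Or.inr ⟨hv, h⟩
  · by_cases h : w ∈ (R2 T₁ T₂).nodes
    · exact Or.inl ⟨h, hw.2⟩
    · exact Or.inr ⟨hw.1, h⟩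

lemma clus_nonempty {x : V ⊕ W} (hx : Kept T₁ T₂ x) : (clus T₁ T₂ x).Nonempty := by
  cases x with
  | inl v => exact restrict_cluster_nonempty hx
  | inr w => exact restrict_cluster_nonempty hx.1

lemma clus_mem_CC {x : V ⊕ W} (hx : Kept T₁ T₂ x) : clus T₁ T₂ x ∈ CC T₁ T₂ := by
  cases x with
  | inl v => exact Or.inl (mem_clusterRep_iff.mpr ⟨v, hx, rfl⟩)
  | inr w => exact Or.inr (mem_clusterRep_iff.mpr ⟨w, hx.1, rfl⟩)

lemma CC_subset_com {Y : Set α} (hY : Y ∈ CC T₁ T₂) : Y ⊆ com T₁ T₂ := by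
  rcases hY with hY | hY <;> obtain ⟨v, hv, rfl⟩ := mem_clusterRep_iff.mp hY
  · exact restrict_cluster_subset v
  · exact restrict_cluster_subset v

lemma com_finite (h₁ : T₁.IsATree) : (com T₁ T₂).Finite :=
  (labelSet_finite h₁).subset Set.inter_subset_left

lemma CC_mem_finite (h₁ : T₁.IsATree) {Y : Set α} (hY : Y ∈ CC T₁ T₂) : Y.Finite :=
  (com_finite h₁).subset (CC_subset_com hY)

lemma CC_mem_nonempty {Y : Set α} (hY : Y ∈ CC T₁ T₂) : Y.Nonempty := by
  rcases hY with hY | hY <;> obtain ⟨v, hv, rfl⟩ := mem_clusterRep_iff.mp hY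
  · exact restrict_cluster_nonempty hv
  · exact restrict_cluster_nonempty hv

lemma CC_finite (h₁ : T₁.IsATree) (h₂ : T₂.IsATree) : (CC T₁ T₂).Finite :=
  ((clusterRep_finite (hR1 h₁)).union (clusterRep_finite (hR2 h₂)))

lemma mrg_k_pos (h₁ : T₁.IsATree) (h₂ : T₂.IsATree) {Y : Set α}
    (hscl : ∀ (a : α) (v : V) (w : W), a ∈ com T₁ T₂ → T₁.label v = some a →
      T₂.label w = some a → (R1 T₁ T₂).cluster v = (R2 T₁ T₂).cluster w)
    (hm : mrg T₁ T₂ Y) : 1 ≤ k1 T₁ T₂ Y ∧ 1 ≤ k2 T₁ T₂ Y := by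
  obtain ⟨w, hw, ⟨v, b, hv, hwl, hb⟩, hcl⟩ := hm
  constructor
  · refine (mcount_pos_iff (hR1 h₁)).mpr ⟨v, ?_, ?_⟩
    · exact (hR1 h₁).label_mem (restrict_label_iff.mpr ⟨hb, hv⟩)
    · rw [hscl b v w hb hv hwl, hcl]
  · exact (mcount_pos_iff (hR2 h₂)).mpr ⟨w, hw, hcl⟩

lemma mnum_le_one (Y : Set α) : mnum T₁ T₂ Y ≤ 1 := by
  unfold mnum; split <;> omega

lemma mnum_le_k1 (h₁ : T₁.IsATree) (h₂ : T₂.IsATree) {Y : Set α}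
    (hscl : ∀ (a : α) (v : V) (w : W), a ∈ com T₁ T₂ → T₁.label v = some a →
      T₂.label w = some a → (R1 T₁ T₂).cluster v = (R2 T₁ T₂).cluster w)
    : mnum T₁ T₂ Y ≤ k1 T₁ T₂ Y := by
  unfold mnum; split
  · rename_i hm; exact (mrg_k_pos h₁ h₂ hscl hm).1
  · omega

lemma mnum_le_k2 (h₁ : T₁.IsATree) (h₂ : T₂.IsATree) {Y : Set α}
    (hscl : ∀ (a : α) (v : V) (w : W), a ∈ com T₁ T₂ → T₁.label v = some a →
      T₂.label w = some a → (R1 T₁ T₂).cluster v = (R2 T₁ T₂).cluster w)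
    : mnum T₁ T₂ Y ≤ k2 T₁ T₂ Y := by
  unfold mnum; split
  · rename_i hm; exact (mrg_k_pos h₁ h₂ hscl hm).2
  · omega

end Basic

end Glue

end PreTree
namespace PreTree

section Glue2

variable {α V W : Type}

variable (T₁ : PreTree α V) (T₂ : PreTree α W)

/-- The processed form of the first part of condition (iii). -/
def SclH : Prop :=
  ∀ (a : α) (v : V) (w : W), a ∈ com T₁ T₂ → T₁.label v = some a →
    T₂.label w = some a → (R1 T₁ T₂).cluster v = (R2 T₁ T₂).cluster w

/-- The processed form of the second part of condition (iii). -/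
def CmpH : Prop :=
  ∀ Y ∈ CC T₁ T₂, ∀ Z ∈ CC T₁ T₂, (Y ∩ Z).Nonempty → Y ⊆ Z ∨ Z ⊆ Y

variable {T₁ T₂}

lemma gpos_ge_one (h₁ : T₁.IsATree) (h₂ : T₂.IsATree) (hscl : SclH T₁ T₂) {x : V ⊕ W}
    (hx : Kept T₁ T₂ x) : 1 ≤ gpos T₁ T₂ x := by
  cases x with
  | inl v => exact chainIdx_pos _ v
  | inr w =>
    have h1 := chainIdx_pos (R2 T₁ T₂) w
    have h2 := mnum_le_k1 h₁ h₂ hscl (Y := (R2 T₁ T₂).cluster w)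
    simp only [gpos, Sum.elim_inr]
    omega

lemma gpos_le_top (h₁ : T₁.IsATree) (h₂ : T₂.IsATree) (hscl : SclH T₁ T₂) {x : V ⊕ W}
    (hx : Kept T₁ T₂ x) : gpos T₁ T₂ x ≤ gtop T₁ T₂ (clus T₁ T₂ x) := by
  cases x with
  | inl v =>
    have h1 := chainIdx_le_mcount (hR1 h₁) (v := v) hx
    have h2 := mnum_le_k2 h₁ h₂ hscl (Y := (R1 T₁ T₂).cluster v)
    simp only [gpos, gtop, clus, Sum.elim_inl, k1, k2] at *
    omega
  | inr w =>
    have h1 := chainIdx_le_mcount (hR2 h₂) (v := w) hx.1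
    have h2 := mnum_le_k1 h₁ h₂ hscl (Y := (R2 T₁ T₂).cluster w)
    simp only [gpos, gtop, clus, Sum.elim_inr, k1, k2] at *
    omega

lemma gpos_inj (h₁ : T₁.IsATree) (h₂ : T₂.IsATree) (hscl : SclH T₁ T₂) {x y : V ⊕ W}
    (hx : Kept T₁ T₂ x) (hy : Kept T₁ T₂ y) (hc : clus T₁ T₂ x = clus T₁ T₂ y)
    (hp : gpos T₁ T₂ x = gpos T₁ T₂ y) : x = y := by
  classical
  have key : ∀ (v : V) (w : W), Kept T₁ T₂ (Sum.inl v) → Kept T₁ T₂ (Sum.inr w) →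
      clus T₁ T₂ (Sum.inl v) = clus T₁ T₂ (Sum.inr w) →
      gpos T₁ T₂ (Sum.inl v) ≠ gpos T₁ T₂ (Sum.inr w) := by
    intro v w hv hw hcvw hpvw
    simp only [clus, Sum.elim_inl, Sum.elim_inr] at hcvw
    simp only [gpos, Sum.elim_inl, Sum.elim_inr] at hpvw
    have hle : (R1 T₁ T₂).chainIdx v ≤ k1 T₁ T₂ ((R2 T₁ T₂).cluster w) := by
      have := chainIdx_le_mcount (hR1 h₁) (v := v) hv
      rwa [hcvw] at this
    have hwidx := chainIdx_pos (R2 T₁ T₂) w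
    by_cases hm : mrg T₁ T₂ ((R2 T₁ T₂).cluster w)
    · have hm1 : mnum T₁ T₂ ((R2 T₁ T₂).cluster w) = 1 := by simp [mnum, hm]
      have hk1 := (mrg_k_pos h₁ h₂ hscl hm).1
      rw [hm1] at hpvw
      have hidxw : (R2 T₁ T₂).chainIdx w = 1 := by omega
      obtain ⟨w₀, hw₀, hw₀m, hw₀c⟩ := hm
      have : w = w₀ :=
        chainIdx_inj (hR2 h₂) hw.1 hw₀ hw₀c.symm (restrict_cluster_nonempty hw₀)
          (by rw [hidxw, merged_idx_one h₂ hw₀m])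
      exact hw.2 (this ▸ hw₀m)
    · have hm0 : mnum T₁ T₂ ((R2 T₁ T₂).cluster w) = 0 := by simp [mnum, hm]
      omega
  cases x with
  | inl v =>
    cases y with
    | inl v' =>
      simp only [clus, Sum.elim_inl] at hc
      simp only [gpos, Sum.elim_inl] at hp
      have := chainIdx_inj (hR1 h₁) hx hy hc (restrict_cluster_nonempty hy) hp
      rw [this]
    | inr w => exact absurd hp (key v w hx hy hc)
  | inr w =>
    cases y with
    | inl v => exact absurd hp.symm (key v w hy hx hc.symm)
    | inr w' =>
      simp only [clus, Sum.elim_inr] at hc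
      simp only [gpos, Sum.elim_inr] at hp
      rw [hc] at hp
      have hk := mnum_le_k1 h₁ h₂ hscl (Y := (R2 T₁ T₂).cluster w')
      have i1 := chainIdx_pos (R2 T₁ T₂) w
      have i2 := chainIdx_pos (R2 T₁ T₂) w'
      have hidx : (R2 T₁ T₂).chainIdx w = (R2 T₁ T₂).chainIdx w' := by omega
      have := chainIdx_inj (hR2 h₂) hx.1 hy.1 hc (restrict_cluster_nonempty hy.1) hidx
      rw [this]

lemma gpos_surj (h₁ : T₁.IsATree) (h₂ : T₂.IsATree) (hscl : SclH T₁ T₂) {Y : Set α}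
    (hY : Y ∈ CC T₁ T₂) {p : ℕ} (hp1 : 1 ≤ p) (hp2 : p ≤ gtop T₁ T₂ Y) :
    ∃ x, Kept T₁ T₂ x ∧ clus T₁ T₂ x = Y ∧ gpos T₁ T₂ x = p := by
  classical
  have hYne := CC_mem_nonempty hY
  by_cases hpk : p ≤ k1 T₁ T₂ Y
  · obtain ⟨v, hv, hvc, hvi⟩ := chainIdx_surj (hR1 h₁) hYne hp1 hpk
    exact ⟨Sum.inl v, hv, hvc, hvi⟩
  · push_neg at hpk
    by_cases hm : mrg T₁ T₂ Y
    · have hm1 : mnum T₁ T₂ Y = 1 := by simp [mnum, hm]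
      have hk1 := (mrg_k_pos h₁ h₂ hscl hm).1
      have hj1 : 1 ≤ p - k1 T₁ T₂ Y + 1 := by omega
      have hj2 : p - k1 T₁ T₂ Y + 1 ≤ k2 T₁ T₂ Y := by
        simp only [gtop, hm1] at hp2; omega
      obtain ⟨w, hw, hwc, hwi⟩ := chainIdx_surj (hR2 h₂) hYne hj1 hj2
      have hnm : ¬ Merged T₁ T₂ w := by
        intro hmw
        have := merged_idx_one h₂ hmw
        omega
      refine ⟨Sum.inr w, ⟨hw, hnm⟩, hwc, ?_⟩
      simp only [gpos, Sum.elim_inr, hwc, hm1, hwi]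
      omega
    · have hm0 : mnum T₁ T₂ Y = 0 := by simp [mnum, hm]
      have hj1 : 1 ≤ p - k1 T₁ T₂ Y := by omega
      have hj2 : p - k1 T₁ T₂ Y ≤ k2 T₁ T₂ Y := by
        simp only [gtop, hm0] at hp2; omega
      obtain ⟨w, hw, hwc, hwi⟩ := chainIdx_surj (hR2 h₂) hYne hj1 hj2
      have hnm : ¬ Merged T₁ T₂ w := fun hmw => hm ⟨w, hw, hmw, hwc⟩
      refine ⟨Sum.inr w, ⟨hw, hnm⟩, hwc, ?_⟩
      simp only [gpos, Sum.elim_inr, hwc, hm0, hwi]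
      omega

lemma emb2_of_not_merged {w : W} (hm : ¬ Merged T₁ T₂ w) : emb2 T₁ T₂ w = Sum.inr w := by
  simp [emb2, hm]

lemma emb2_of_merged {w : W} (hm : Merged T₁ T₂ w) :
    ∃ (v : V) (b : α), emb2 T₁ T₂ w = Sum.inl v ∧ T₁.label v = some b ∧
      T₂.label w = some b ∧ b ∈ com T₁ T₂ := by
  classical
  simp only [emb2, dif_pos hm]
  obtain ⟨b, hb⟩ := hm.choose_spec
  exact ⟨hm.choose, b, rfl, hb⟩

lemma emb2_label {w : W} : (glueTree T₁ T₂).label (emb2 T₁ T₂ w) = T₂.label w := by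
  classical
  by_cases hm : Merged T₁ T₂ w
  · obtain ⟨v, b, he, hv, hw, hb⟩ := emb2_of_merged hm
    rw [he]
    simp only [glueTree, Sum.elim_inl]
    rw [hv, hw]
  · rw [emb2_of_not_merged hm]
    simp only [glueTree, Sum.elim_inr, if_neg hm]

lemma emb2_kept (h₁ : T₁.IsATree) (h₂ : T₂.IsATree) (hscl : SclH T₁ T₂) {w : W}
    (hw : w ∈ (R2 T₁ T₂).nodes) :
    Kept T₁ T₂ (emb2 T₁ T₂ w) ∧ clus T₁ T₂ (emb2 T₁ T₂ w) = (R2 T₁ T₂).cluster w := by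
  classical
  by_cases hm : Merged T₁ T₂ w
  · obtain ⟨v, b, he, hv, hwl, hb⟩ := emb2_of_merged hm
    rw [he]
    have hvm : v ∈ (R1 T₁ T₂).nodes := (hR1 h₁).label_mem (restrict_label_iff.mpr ⟨hb, hv⟩)
    exact ⟨hvm, by simpa [clus] using hscl b v w hb hv hwl⟩
  · rw [emb2_of_not_merged hm]
    exact ⟨⟨hw, hm⟩, rfl⟩

lemma emb2_gpos_merged (h₁ : T₁.IsATree) (h₂ : T₂.IsATree) {w : W}
    (hm : Merged T₁ T₂ w) : gpos T₁ T₂ (emb2 T₁ T₂ w) = 1 := by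
  obtain ⟨v, b, he, hv, hwl, hb⟩ := emb2_of_merged hm
  rw [he]
  simp only [gpos, Sum.elim_inl]
  exact labeled_chainIdx_one (hR1 h₁) (restrict_label_iff.mpr ⟨hb, hv⟩)

lemma emb2_gpos_lt (h₁ : T₁.IsATree) (h₂ : T₂.IsATree) (hscl : SclH T₁ T₂) {w w' : W}
    (hw : w ∈ (R2 T₁ T₂).nodes) (hw' : w' ∈ (R2 T₁ T₂).nodes)
    (hc : (R2 T₁ T₂).cluster w = (R2 T₁ T₂).cluster w')
    (hidx : (R2 T₁ T₂).chainIdx w < (R2 T₁ T₂).chainIdx w') :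
    gpos T₁ T₂ (emb2 T₁ T₂ w) < gpos T₁ T₂ (emb2 T₁ T₂ w') := by
  classical
  have hw'nm : ¬ Merged T₁ T₂ w' := by
    intro hmw
    have := merged_idx_one h₂ hmw
    have := chainIdx_pos (R2 T₁ T₂) w
    omega
  rw [emb2_of_not_merged hw'nm]
  by_cases hm : Merged T₁ T₂ w
  · rw [emb2_gpos_merged h₁ h₂ hm]
    have hmrg : mrg T₁ T₂ ((R2 T₁ T₂).cluster w') = True := by
      simp only [eq_iff_iff, iff_true]
      exact ⟨w, hw, hm, hc⟩
    have hm1 : mnum T₁ T₂ ((R2 T₁ T₂).cluster w') = 1 := by simp [mnum, hmrg]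
    have hk1 := (mrg_k_pos h₁ h₂ hscl (Y := (R2 T₁ T₂).cluster w') ⟨w, hw, hm, hc⟩).1
    have hi1 : 2 ≤ (R2 T₁ T₂).chainIdx w' := by
      have := merged_idx_one h₂ hm; omega
    simp only [gpos, Sum.elim_inr, hm1]
    omega
  · rw [emb2_of_not_merged hm]
    simp only [gpos, Sum.elim_inr, hc]
    have := mnum_le_k1 h₁ h₂ hscl (Y := (R2 T₁ T₂).cluster w')
    omega

lemma emb2_mem_nodes (h₁ : T₁.IsATree) {w : W} (hw : w ∈ T₂.nodes) :
    emb2 T₁ T₂ w ∈ (glueTree T₁ T₂).nodes := by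
  classical
  by_cases hm : Merged T₁ T₂ w
  · obtain ⟨v, b, he, hv, hwl, hb⟩ := emb2_of_merged hm
    rw [he]
    exact Or.inl ⟨v, h₁.label_mem hv, rfl⟩
  · rw [emb2_of_not_merged hm]
    exact Or.inr ⟨w, ⟨hw, hm⟩, rfl⟩

lemma emb2_inj (h₁ : T₁.IsATree) (h₂ : T₂.IsATree) {w w' : W}
    (he : emb2 T₁ T₂ w = emb2 T₁ T₂ w') : w = w' := by
  classical
  by_cases hm : Merged T₁ T₂ w <;> by_cases hm' : Merged T₁ T₂ w'
  · obtain ⟨v, b, hev, hv, hwl, hb⟩ := emb2_of_merged hm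
    obtain ⟨v', b', hev', hv', hwl', hb'⟩ := emb2_of_merged hm'
    rw [hev, hev'] at he
    have hvv : v = v' := Sum.inl.inj he
    subst hvv
    rw [hv] at hv'
    have : b = b' := Option.some.inj hv'.symm |>.symm
    subst this
    exact h₂.label_inj hwl hwl'
  · obtain ⟨v, b, hev, _, _, _⟩ := emb2_of_merged hm
    rw [hev, emb2_of_not_merged hm'] at he
    exact absurd he (by simp)
  · obtain ⟨v, b, hev, _, _, _⟩ := emb2_of_merged hm'
    rw [hev, emb2_of_not_merged hm] at he
    exact absurd he (by simp)
  · rw [emb2_of_not_merged hm, emb2_of_not_merged hm'] at he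
    exact Sum.inr.inj he

end Glue2

end PreTree
namespace PreTree

section Glue3

variable {α V W : Type}
variable {T₁ : PreTree α V} {T₂ : PreTree α W}

lemma emb2_eq_inl (h₁ : T₁.IsATree) {w : W} {v : V} (he : emb2 T₁ T₂ w = Sum.inl v) :
    v ∈ (R1 T₁ T₂).nodes := by
  classical
  by_cases hm : Merged T₁ T₂ w
  · obtain ⟨v', b, he', hv', hwl, hb⟩ := emb2_of_merged hm
    rw [he'] at he
    have : v' = v := Sum.inl.inj he
    subst this
    exact (hR1 h₁).label_mem (restrict_label_iff.mpr ⟨hb, hv'⟩)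
  · rw [emb2_of_not_merged hm] at he
    exact absurd he (by simp)

/-- A path starting at a removed `T₁`-node stays among removed `T₁`-nodes. -/
lemma rem_path_l (h₁ : T₁.IsATree) (h₂ : T₂.IsATree) {x y : V ⊕ W}
    (h : (glueTree T₁ T₂).path x y) :
    ∀ v, x = Sum.inl v → v ∈ T₁.nodes → v ∉ (R1 T₁ T₂).nodes →
    ∃ v', y = Sum.inl v' ∧ T₁.path v v' ∧ v' ∈ T₁.nodes ∧ v' ∉ (R1 T₁ T₂).nodes := by
  induction h with
  | refl => exact fun v hx hv hr => ⟨v, hx, path_refl _ v, hv, hr⟩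
  | tail hp harc ih =>
    rename_i z y
    intro v hx hv hr
    obtain ⟨v', rfl, hpath, hv', hr'⟩ := ih v hx hv hr
    rcases harc with ⟨hk, -⟩ | ⟨a, a', ha, ha', harc', hnr⟩ | ⟨w, w', hw, -, -, -⟩
    · exact absurd hk hr'
    · have : a = v' := (Sum.inl.inj ha).symm
      subst this
      exact ⟨a', ha', Relation.ReflTransGen.tail hpath harc', h₁.arc_mem_right harc', hnr⟩
    · exact absurd (emb2_eq_inl h₁ hw.symm) hr'

/-- A path starting at a removed `T₂`-node stays among removed `T₂`-nodes. -/
lemma rem_path_r (h₁ : T₁.IsATree) (h₂ : T₂.IsATree) {x y : V ⊕ W}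
    (h : (glueTree T₁ T₂).path x y) :
    ∀ w, x = Sum.inr w → w ∈ T₂.nodes → w ∉ (R2 T₁ T₂).nodes →
    ∃ w', y = Sum.inr w' ∧ T₂.path w w' ∧ w' ∈ T₂.nodes ∧ w' ∉ (R2 T₁ T₂).nodes := by
  classical
  induction h with
  | refl => exact fun w hx hw hr => ⟨w, hx, path_refl _ w, hw, hr⟩
  | tail hp harc ih =>
    rename_i z y
    intro w hx hw hr
    obtain ⟨w', rfl, hpath, hw', hr'⟩ := ih w hx hw hr
    rcases harc with ⟨hk, -⟩ | ⟨a, a', ha, -, -, -⟩ | ⟨b, b', hb, hb', harc', hnr⟩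
    · exact absurd hk.1 hr'
    · exact absurd ha (by simp)
    · have hbnm : ¬ Merged T₁ T₂ b := by
        intro hm
        obtain ⟨v', c, he', -, -, -⟩ := emb2_of_merged hm
        rw [he'] at hb
        exact absurd hb (by simp)
      rw [emb2_of_not_merged hbnm] at hb
      have : b = w' := (Sum.inr.inj hb).symm
      subst this
      exact ⟨b', hb', Relation.ReflTransGen.tail hpath harc', h₂.arc_mem_right harc', hnr⟩

/-- The chain invariant along paths between kept nodes. -/
lemma kept_invariant (h₁ : T₁.IsATree) (h₂ : T₂.IsATree) {x y : V ⊕ W}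
    (h : (glueTree T₁ T₂).path x y) (hy : Kept T₁ T₂ y) :
    clus T₁ T₂ y ⊆ clus T₁ T₂ x ∧
      (clus T₁ T₂ y = clus T₁ T₂ x → gpos T₁ T₂ y ≤ gpos T₁ T₂ x) := by
  induction h using Relation.ReflTransGen.head_induction_on with
  | refl => exact ⟨le_refl _, fun _ => le_refl _⟩
  | head harc hp ih =>
    rename_i x z
    rcases harc with ⟨hkx, hkz, htype⟩ | ⟨a, a', ha, ha', harc', hnr⟩ | ⟨b, b', hb, hb', harc', hnr⟩
    · obtain ⟨hsub, hpos⟩ := ih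
      rcases htype with ⟨hcl, hgp⟩ | ⟨-, hss, -, -⟩
      · refine ⟨by rw [hcl]; exact hsub, fun hce => ?_⟩
        have := hpos (hce.trans hcl)
        omega
      · refine ⟨hsub.trans hss.subset, fun hce => ?_⟩
        exfalso
        rw [hce] at hsub
        exact hss.not_subset hsub
    · obtain ⟨v', hyv, -, -, hr'⟩ :=
        rem_path_l h₁ h₂ hp a' ha' (h₁.arc_mem_right harc') hnr
      rw [hyv] at hy
      exact absurd hy hr'
    · obtain ⟨w', hyw, -, -, hr'⟩ :=
        rem_path_r h₁ h₂ hp b' hb' (h₂.arc_mem_right harc') hnr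
      rw [hyw] at hy
      exact absurd hy.1 hr'

end Glue3

end PreTree
namespace PreTree

section Glue4

variable {α V W : Type}
variable {T₁ : PreTree α V} {T₂ : PreTree α W}

lemma gtop_pos (h₁ : T₁.IsATree) (h₂ : T₂.IsATree) (hscl : SclH T₁ T₂) {Y : Set α}
    (hY : Y ∈ CC T₁ T₂) : 1 ≤ gtop T₁ T₂ Y := by
  have hk1 := mnum_le_k1 h₁ h₂ hscl (Y := Y)
  have hk2 := mnum_le_k2 h₁ h₂ hscl (Y := Y)
  have : 1 ≤ k1 T₁ T₂ Y ∨ 1 ≤ k2 T₁ T₂ Y := by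
    rcases hY with hY | hY <;> obtain ⟨v, hv, rfl⟩ := mem_clusterRep_iff.mp hY
    · exact Or.inl ((mcount_pos_iff (hR1 h₁)).mpr ⟨v, hv, rfl⟩)
    · exact Or.inr ((mcount_pos_iff (hR2 h₂)).mpr ⟨v, hv, rfl⟩)
  have := mnum_le_one (T₁ := T₁) (T₂ := T₂) Y
  simp only [gtop]
  omega

lemma chain_descend (h₁ : T₁.IsATree) (h₂ : T₂.IsATree) (hscl : SclH T₁ T₂) :
    ∀ (d : ℕ) (x : V ⊕ W), Kept T₁ T₂ x → ∀ q, 1 ≤ q → q + d = gpos T₁ T₂ x →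
    ∃ y, Kept T₁ T₂ y ∧ clus T₁ T₂ y = clus T₁ T₂ x ∧ gpos T₁ T₂ y = q ∧
      (glueTree T₁ T₂).path x y := by
  intro d
  induction d with
  | zero =>
    intro x hx q hq1 hq2
    exact ⟨x, hx, rfl, by omega, path_refl _ x⟩
  | succ n ih =>
    intro x hx q hq1 hq2
    have hb1 : 1 ≤ gpos T₁ T₂ x - 1 := by omega
    have hb2 : gpos T₁ T₂ x - 1 ≤ gtop T₁ T₂ (clus T₁ T₂ x) := by
      have := gpos_le_top h₁ h₂ hscl hx
      omega
    obtain ⟨z, hz, hzc, hzp⟩ := gpos_surj h₁ h₂ hscl (clus_mem_CC hx) hb1 hb2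
    have harc : (glueTree T₁ T₂).arc x z :=
      Or.inl ⟨hx, hz, Or.inl ⟨hzc.symm, by omega⟩⟩
    obtain ⟨y, hy, hyc, hyp, hpath⟩ := ih z hz q hq1 (by omega)
    exact ⟨y, hy, hyc.trans hzc, hyp, Relation.ReflTransGen.head harc hpath⟩

lemma glue_reach (h₁ : T₁.IsATree) (h₂ : T₂.IsATree) (hscl : SclH T₁ T₂)
    (hcmp : CmpH T₁ T₂) :
    ∀ (n : ℕ) (x y : V ⊕ W), Kept T₁ T₂ x → Kept T₁ T₂ y →
    clus T₁ T₂ y ⊆ clus T₁ T₂ x →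
    (clus T₁ T₂ y = clus T₁ T₂ x → gpos T₁ T₂ y ≤ gpos T₁ T₂ x) →
    (clus T₁ T₂ x).ncard ≤ n → (glueTree T₁ T₂).path x y := by
  intro n
  induction n with
  | zero =>
    intro x y hx hy hsub hpos hcard
    exfalso
    have h1 : 0 < (clus T₁ T₂ x).ncard :=
      (Set.ncard_pos (CC_mem_finite h₁ (clus_mem_CC hx))).mpr (clus_nonempty hx)
    omega
  | succ n ih =>
    intro x y hx hy hsub hpos hcard
    by_cases hce : clus T₁ T₂ y = clus T₁ T₂ x
    · have hq1 : 1 ≤ gpos T₁ T₂ y := gpos_ge_one h₁ h₂ hscl hy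
      obtain ⟨z, hz, hzc, hzp, hpath⟩ := chain_descend h₁ h₂ hscl
        (gpos T₁ T₂ x - gpos T₁ T₂ y) x hx (gpos T₁ T₂ y) hq1 (by have := hpos hce; omega)
      have : z = y := gpos_inj h₁ h₂ hscl hz hy (hzc.trans hce.symm) (by omega)
      rwa [this] at hpath
    · have hss : clus T₁ T₂ y ⊂ clus T₁ T₂ x := HasSubset.Subset.ssubset_of_ne hsub hce
      -- descend to the bottom of the chain of x
      obtain ⟨x₁, hx₁, hx₁c, hx₁p, hpath₁⟩ := chain_descend h₁ h₂ hscl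
        (gpos T₁ T₂ x - 1) x hx 1 le_rfl (by have := gpos_ge_one h₁ h₂ hscl hx; omega)
      -- find a maximal intermediate cluster
      set M : Set (Set α) := {Z | Z ∈ CC T₁ T₂ ∧ clus T₁ T₂ y ⊆ Z ∧ Z ⊂ clus T₁ T₂ x}
        with hM
      have hMne : M.Nonempty := ⟨clus T₁ T₂ y, clus_mem_CC hy, le_refl _, hss⟩
      have hMfin : M.Finite := (CC_finite h₁ h₂).subset (fun Z hZ => hZ.1)
      obtain ⟨Z', hZ'M, hmax⟩ : ∃ Z' ∈ M, ∀ Z'' ∈ M, id Z' ≤ id Z'' → id Z' = id Z'' := by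
        obtain ⟨i, hi⟩ := hMfin.exists_maximal hMne
        exact ⟨i, hi.prop, fun Z'' h hle => hi.eq_of_le h hle⟩
      obtain ⟨hZ'CC, hZ'y, hZ'x⟩ := hZ'M
      -- the top node of the chain of Z'
      obtain ⟨t, ht, htc, htp⟩ := gpos_surj h₁ h₂ hscl hZ'CC
        (gtop_pos h₁ h₂ hscl hZ'CC) (le_refl _)
      have harc : (glueTree T₁ T₂).arc x₁ t := by
        refine Or.inl ⟨hx₁, ht, Or.inr ⟨hx₁p, ?_, by rw [htc]; exact htp, ?_⟩⟩
        · rw [htc, hx₁c]; exact hZ'x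
        · rintro ⟨Z'', hZ''CC, hZ''1, hZ''2⟩
          rw [htc] at hZ''1
          rw [hx₁c] at hZ''2
          have hZ''M : Z'' ∈ M := ⟨hZ''CC, hZ'y.trans hZ''1.subset, hZ''2⟩
          have := hmax Z'' hZ''M hZ''1.subset
          exact hZ''1.ne (by simpa using this)
      have hfin : (clus T₁ T₂ x).Finite := CC_mem_finite h₁ (clus_mem_CC hx)
      have hlt : Z'.ncard < (clus T₁ T₂ x).ncard := Set.ncard_lt_ncard hZ'x hfin
      have hrec : (glueTree T₁ T₂).path t y := by
        refine ih t y ht hy (by rw [htc]; exact hZ'y) ?_ (by rw [htc]; omega)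
        intro hce'
        have ht2 := gpos_le_top h₁ h₂ hscl hy
        rw [hce', htc] at ht2
        rw [htp]
        exact ht2
      exact path_trans (path_trans hpath₁ (arc_path harc)) hrec

end Glue4

end PreTree
namespace PreTree

section Glue5

variable {α V W : Type}
variable {T₁ : PreTree α V} {T₂ : PreTree α W}

lemma desc_subset_nodes {T : PreTree α V} (hT : T.IsATree) {v : V} (hv : v ∈ T.nodes) :
    {u | T.path v u} ⊆ T.nodes := by
  intro u hu
  rcases Relation.ReflTransGen.cases_tail hu with rfl | ⟨y, -, hy⟩
  · exact hv
  · exact hT.arc_mem_right hy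

lemma desc_ncard_lt {T : PreTree α V} (hT : T.IsATree) {v v' : V} (harc : T.arc v v') :
    {u | T.path v' u}.ncard < {u | T.path v u}.ncard := by
  have hv : v ∈ T.nodes := hT.arc_mem_left harc
  have hss : {u | T.path v' u} ⊂ {u | T.path v u} := by
    constructor
    · intro u hu; exact Relation.ReflTransGen.head harc hu
    · intro hcon
      exact hT.acyclic harc (hcon (path_refl T v))
  exact Set.ncard_lt_ncard hss (hT.finite_nodes.subset (desc_subset_nodes hT hv))

lemma desc_ncard_le {T : PreTree α V} (hT : T.IsATree) {v : V} (hv : v ∈ T.nodes) :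
    {u | T.path v u}.ncard ≤ T.nodes.ncard :=
  Set.ncard_le_ncard (desc_subset_nodes hT hv) hT.finite_nodes

lemma mcount_le_nodes {T : PreTree α V} (hT : T.IsATree) (Y : Set α) :
    mcount T Y ≤ T.nodes.ncard :=
  Set.ncard_le_ncard (fun u hu => hu.1) hT.finite_nodes

lemma k_le_nodes (h₁ : T₁.IsATree) (h₂ : T₂.IsATree) (Y : Set α) :
    k1 T₁ T₂ Y ≤ T₁.nodes.ncard ∧ k2 T₁ T₂ Y ≤ T₂.nodes.ncard := by
  constructor
  · exact (mcount_le_nodes (hR1 h₁) Y).trans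
      (Set.ncard_le_ncard (fun v hv => hv.1) h₁.finite_nodes)
  · exact (mcount_le_nodes (hR2 h₂) Y).trans
      (Set.ncard_le_ncard (fun v hv => hv.1) h₂.finite_nodes)

lemma gpos_le_B (h₁ : T₁.IsATree) (h₂ : T₂.IsATree) (hscl : SclH T₁ T₂) {x : V ⊕ W}
    (hx : Kept T₁ T₂ x) : gpos T₁ T₂ x ≤ T₁.nodes.ncard + T₂.nodes.ncard := by
  have h1 := gpos_le_top h₁ h₂ hscl hx
  have h2 := k_le_nodes h₁ h₂ (clus T₁ T₂ x)
  simp only [gtop] at h1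
  omega

open Classical in
noncomputable def gmu (T₁ : PreTree α V) (T₂ : PreTree α W) : V ⊕ W → ℕ := fun x =>
  if Kept T₁ T₂ x then
    (T₁.nodes.ncard + T₂.nodes.ncard + 1) * (clus T₁ T₂ x).ncard + gpos T₁ T₂ x
  else Sum.elim (fun v => {u | T₁.path v u}.ncard) (fun w => {u | T₂.path w u}.ncard) x

lemma gmu_kept_ge (h₁ : T₁.IsATree) (h₂ : T₂.IsATree) (hscl : SclH T₁ T₂) {x : V ⊕ W}
    (hx : Kept T₁ T₂ x) :
    T₁.nodes.ncard + T₂.nodes.ncard + 1 + 1 ≤ gmu T₁ T₂ x := by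
  classical
  have hc : 1 ≤ (clus T₁ T₂ x).ncard :=
    (Set.ncard_pos (CC_mem_finite h₁ (clus_mem_CC hx))).mpr (clus_nonempty hx)
  have hp := gpos_ge_one h₁ h₂ hscl hx
  simp only [gmu, if_pos hx]
  have := Nat.le_mul_of_pos_right (T₁.nodes.ncard + T₂.nodes.ncard + 1) (by omega : 0 < (clus T₁ T₂ x).ncard)
  omega

lemma gmu_lt_of_arc (h₁ : T₁.IsATree) (h₂ : T₂.IsATree) (hscl : SclH T₁ T₂) {x y : V ⊕ W}
    (h : (glueTree T₁ T₂).arc x y) : gmu T₁ T₂ y < gmu T₁ T₂ x := by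
  classical
  set B := T₁.nodes.ncard + T₂.nodes.ncard + 1 with hB
  rcases h with ⟨hkx, hky, htype⟩ | ⟨v, v', rfl, rfl, harc, hnr⟩ | ⟨w, w', he, rfl, harc, hnr⟩
  · simp only [gmu, if_pos hkx, if_pos hky, ← hB]
    rcases htype with ⟨hcl, hgp⟩ | ⟨hp1, hss, hpt, -⟩
    · rw [hcl, hgp]; omega
    · have hlt : (clus T₁ T₂ y).ncard < (clus T₁ T₂ x).ncard :=
        Set.ncard_lt_ncard hss (CC_mem_finite h₁ (clus_mem_CC hkx))
      have hby : gpos T₁ T₂ y ≤ T₁.nodes.ncard + T₂.nodes.ncard := gpos_le_B h₁ h₂ hscl hky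
      have hbx : 1 ≤ gpos T₁ T₂ x := gpos_ge_one h₁ h₂ hscl hkx
      have hmul : B * ((clus T₁ T₂ y).ncard + 1) ≤ B * (clus T₁ T₂ x).ncard :=
        Nat.mul_le_mul_left B (by omega)
      rw [Nat.mul_add, Nat.mul_one] at hmul
      omega
  · -- arc into a removed T₁-node
    have hnk : ¬ Kept T₁ T₂ (Sum.inl v') := hnr
    have hv' : v' ∈ T₁.nodes := h₁.arc_mem_right harc
    have hyv : gmu T₁ T₂ (Sum.inl v') = {u | T₁.path v' u}.ncard := by
      simp only [gmu, if_neg hnk, Sum.elim_inl]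
    by_cases hkx : Kept T₁ T₂ (Sum.inl v)
    · have := gmu_kept_ge h₁ h₂ hscl hkx
      have := desc_ncard_le h₁ hv'
      rw [hyv]; omega
    · simp only [gmu, if_neg hkx, if_neg hnk, Sum.elim_inl]
      exact desc_ncard_lt h₁ harc
  · -- arc into a removed T₂-node
    have hnk : ¬ Kept T₁ T₂ (Sum.inr w') := fun hk => hnr hk.1
    have hw' : w' ∈ T₂.nodes := h₂.arc_mem_right harc
    have hyv : gmu T₁ T₂ (Sum.inr w') = {u | T₂.path w' u}.ncard := by
      simp only [gmu, if_neg hnk, Sum.elim_inr]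
    by_cases hkx : Kept T₁ T₂ (emb2 T₁ T₂ w)
    · have := gmu_kept_ge h₁ h₂ hscl hkx
      have := desc_ncard_le h₂ hw'
      rw [he, hyv]; omega
    · have hnm : ¬ Merged T₁ T₂ w := by
        intro hm
        obtain ⟨vb, b, he', hv, hwl, hb⟩ := emb2_of_merged hm
        apply hkx
        rw [he']
        exact (hR1 h₁).label_mem (restrict_label_iff.mpr ⟨hb, hv⟩)
      rw [emb2_of_not_merged hnm] at he hkx
      rw [he, hyv]
      simp only [gmu, if_neg hkx, Sum.elim_inr]
      exact desc_ncard_lt h₂ harc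

lemma glue_acyclic (h₁ : T₁.IsATree) (h₂ : T₂.IsATree) (hscl : SclH T₁ T₂) {x y : V ⊕ W}
    (h : (glueTree T₁ T₂).arc x y) (hp : (glueTree T₁ T₂).path y x) : False := by
  have hmono : ∀ {a b : V ⊕ W}, (glueTree T₁ T₂).path a b → gmu T₁ T₂ b ≤ gmu T₁ T₂ a := by
    intro a b hab
    induction hab with
    | refl => exact le_refl _
    | tail hp' harc' ih => exact le_trans (le_of_lt (gmu_lt_of_arc h₁ h₂ hscl harc')) ih
  have h1 := gmu_lt_of_arc h₁ h₂ hscl h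
  have h2 := hmono hp
  omega

lemma glue_parent_unique (h₁ : T₁.IsATree) (h₂ : T₂.IsATree) (hscl : SclH T₁ T₂)
    (hcmp : CmpH T₁ T₂) {x₁ x₂ y : V ⊕ W} (ha1 : (glueTree T₁ T₂).arc x₁ y)
    (ha2 : (glueTree T₁ T₂).arc x₂ y) : x₁ = x₂ := by
  classical
  rcases ha1 with ⟨hk1, hky, ht1⟩ | ⟨v, v', hx1, hyv, harc1, hnr1⟩ | ⟨w, w', hx1, hyw, harc1, hnr1⟩
  · -- first arc is a chain arc; y is kept
    rcases ha2 with ⟨hk2, -, ht2⟩ | ⟨a, a', hx2, hya, harc2, hnr2⟩ | ⟨b, b', hx2, hyb, harc2, hnr2⟩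
    · -- both chain arcs
      rcases ht1 with ⟨hc1, hp1⟩ | ⟨hb1, hss1, hpt1, hmx1⟩ <;>
        rcases ht2 with ⟨hc2, hp2⟩ | ⟨hb2, hss2, hpt2, hmx2⟩
      · exact gpos_inj h₁ h₂ hscl hk1 hk2 (hc1.trans hc2.symm) (by omega)
      · exfalso
        have := gpos_le_top h₁ h₂ hscl hk1
        rw [hc1] at this
        omega
      · exfalso
        have := gpos_le_top h₁ h₂ hscl hk2
        rw [hc2] at this
        omega
      · -- both are cross arcs to a maximal subcluster
        have hCeq : clus T₁ T₂ x₁ = clus T₁ T₂ x₂ := by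
          have hne : (clus T₁ T₂ x₁ ∩ clus T₁ T₂ x₂).Nonempty := by
            obtain ⟨c, hc⟩ := clus_nonempty hky
            exact ⟨c, hss1.subset hc, hss2.subset hc⟩
          rcases hcmp _ (clus_mem_CC hk1) _ (clus_mem_CC hk2) hne with hsub | hsub
          · by_contra hne'
            exact hmx2 ⟨clus T₁ T₂ x₁, clus_mem_CC hk1, hss1,
              HasSubset.Subset.ssubset_of_ne hsub hne'⟩
          · by_contra hne'
            exact hmx1 ⟨clus T₁ T₂ x₂, clus_mem_CC hk2, hss2,
              HasSubset.Subset.ssubset_of_ne hsub (fun h => hne' h.symm)⟩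
        exact gpos_inj h₁ h₂ hscl hk1 hk2 hCeq (by omega)
    · -- second arc is a removed T₁ arc: contradiction with y kept
      exfalso
      rw [hya] at hky
      exact hnr2 hky
    · exfalso
      rw [hyb] at hky
      exact hnr2 hky.1
  · -- y is a removed T₁-node
    rcases ha2 with ⟨-, hky, -⟩ | ⟨a, a', hx2, hya, harc2, hnr2⟩ | ⟨b, b', hx2, hyb, harc2, hnr2⟩
    · exfalso; rw [hyv] at hky; exact hnr1 hky
    · rw [hyv] at hya
      have : a' = v' := (Sum.inl.inj hya).symm
      subst this
      rw [hx1, hx2, h₁.parent_unique harc1 harc2]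
    · exfalso
      rw [hyv] at hyb
      exact absurd hyb (by simp)
  · -- y is a removed T₂-node
    rcases ha2 with ⟨-, hky, -⟩ | ⟨a, a', hx2, hya, harc2, hnr2⟩ | ⟨b, b', hx2, hyb, harc2, hnr2⟩
    · exfalso; rw [hyw] at hky; exact hnr1 hky.1
    · exfalso
      rw [hyw] at hya
      exact absurd hya (by simp)
    · rw [hyw] at hyb
      have : b' = w' := (Sum.inr.inj hyb).symm
      subst this
      rw [hx1, hx2, h₂.parent_unique harc1 harc2]

end Glue5

end PreTree
namespace PreTree

section Glue6

variable {α V W : Type}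
variable {T₁ : PreTree α V} {T₂ : PreTree α W}

lemma glue_mem_inl {v : V} : Sum.inl v ∈ (glueTree T₁ T₂).nodes ↔ v ∈ T₁.nodes := by
  simp [glueTree]

lemma glue_mem_inr {w : W} :
    Sum.inr w ∈ (glueTree T₁ T₂).nodes ↔ w ∈ T₂.nodes ∧ ¬ Merged T₁ T₂ w := by
  simp [glueTree]

lemma clus_subset_com {x : V ⊕ W} (hx : Kept T₁ T₂ x) : clus T₁ T₂ x ⊆ com T₁ T₂ := by
  cases x with
  | inl v => exact restrict_cluster_subset v
  | inr w => exact restrict_cluster_subset w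

lemma glue_arc_mem_left (h₁ : T₁.IsATree) (h₂ : T₂.IsATree) {x y : V ⊕ W}
    (h : (glueTree T₁ T₂).arc x y) : x ∈ (glueTree T₁ T₂).nodes := by
  rcases h with ⟨hk, -, -⟩ | ⟨v, v', rfl, -, harc, -⟩ | ⟨w, w', he, -, harc, -⟩
  · exact kept_mem_nodes hk
  · exact glue_mem_inl.mpr (h₁.arc_mem_left harc)
  · rw [he]; exact emb2_mem_nodes h₁ (h₂.arc_mem_left harc)

lemma glue_arc_mem_right (h₁ : T₁.IsATree) (h₂ : T₂.IsATree) {x y : V ⊕ W}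
    (h : (glueTree T₁ T₂).arc x y) : y ∈ (glueTree T₁ T₂).nodes := by
  rcases h with ⟨-, hk, -⟩ | ⟨v, v', -, rfl, harc, -⟩ | ⟨w, w', -, rfl, harc, hnr⟩
  · exact kept_mem_nodes hk
  · exact glue_mem_inl.mpr (h₁.arc_mem_right harc)
  · exact glue_mem_inr.mpr ⟨h₂.arc_mem_right harc, fun hm => hnr (merged_mem h₂ hm)⟩

lemma glue_finite (h₁ : T₁.IsATree) (h₂ : T₂.IsATree) : (glueTree T₁ T₂).nodes.Finite := by
  refine Set.Finite.union (h₁.finite_nodes.image _) (Set.Finite.image _ ?_)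
  exact h₂.finite_nodes.subset (fun w hw => hw.1)

lemma glue_label_mem {x : V ⊕ W} {a : α} (h₁ : T₁.IsATree) (h₂ : T₂.IsATree)
    (h : (glueTree T₁ T₂).label x = some a) : x ∈ (glueTree T₁ T₂).nodes := by
  classical
  cases x with
  | inl v => exact glue_mem_inl.mpr (h₁.label_mem h)
  | inr w =>
    simp only [glueTree, Sum.elim_inr] at h
    by_cases hm : Merged T₁ T₂ w
    · rw [if_pos hm] at h; exact absurd h (by simp)
    · rw [if_neg hm] at h
      exact glue_mem_inr.mpr ⟨h₂.label_mem h, hm⟩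

lemma glue_label_inj (h₁ : T₁.IsATree) (h₂ : T₂.IsATree) {x y : V ⊕ W} {a : α}
    (hx : (glueTree T₁ T₂).label x = some a) (hy : (glueTree T₁ T₂).label y = some a) :
    x = y := by
  classical
  have hlab : ∀ (v : V) (w : W), T₁.label v = some a →
      (glueTree T₁ T₂).label (Sum.inr w) = some a → False := by
    intro v w hv hw
    simp only [glueTree, Sum.elim_inr] at hw
    by_cases hm : Merged T₁ T₂ w
    · rw [if_pos hm] at hw; exact absurd hw (by simp)
    · rw [if_neg hm] at hw
      exact hm ⟨v, a, hv, hw, ⟨v, hv⟩, ⟨w, hw⟩⟩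
  cases x with
  | inl v =>
    cases y with
    | inl v' =>
      simp only [glueTree, Sum.elim_inl] at hx hy
      rw [h₁.label_inj hx hy]
    | inr w => exact absurd hy (fun h => hlab v w hx h)
  | inr w =>
    cases y with
    | inl v => exact absurd hx (fun h => hlab v w hy h)
    | inr w' =>
      simp only [glueTree, Sum.elim_inr] at hx hy
      by_cases hm : Merged T₁ T₂ w <;> by_cases hm' : Merged T₁ T₂ w'
      · rw [if_pos hm] at hx; exact absurd hx (by simp)
      · rw [if_pos hm] at hx; exact absurd hx (by simp)
      · rw [if_pos hm'] at hy; exact absurd hy (by simp)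
      · rw [if_neg hm] at hx
        rw [if_neg hm'] at hy
        rw [h₂.label_inj hx hy]

lemma glue_rooted (h₁ : T₁.IsATree) (h₂ : T₂.IsATree) (hscl : SclH T₁ T₂)
    (hcmp : CmpH T₁ T₂) (hcom : (com T₁ T₂).Nonempty) :
    ∃ r ∈ (glueTree T₁ T₂).nodes, ∀ z ∈ (glueTree T₁ T₂).nodes, (glueTree T₁ T₂).path r z := by
  classical
  obtain ⟨a, ha⟩ := hcom
  obtain ⟨va, hva⟩ := ha.1
  obtain ⟨wa, hwa⟩ := ha.2
  obtain ⟨r₁, hr₁, hroot₁⟩ := h₁.rooted ⟨va, h₁.label_mem hva⟩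
  obtain ⟨r₂, hr₂, hroot₂⟩ := h₂.rooted ⟨wa, h₂.label_mem hwa⟩
  have hr₁R : r₁ ∈ (R1 T₁ T₂).nodes :=
    ⟨hr₁, ⟨a, ⟨va, hroot₁ va (h₁.label_mem hva), hva⟩, ha⟩⟩
  have hr₂R : r₂ ∈ (R2 T₁ T₂).nodes :=
    ⟨hr₂, ⟨a, ⟨wa, hroot₂ wa (h₂.label_mem hwa), hwa⟩, ha⟩⟩
  have hclr : (R1 T₁ T₂).cluster r₁ = com T₁ T₂ := by
    rw [R1, restrict_cluster]
    apply Set.inter_eq_self_of_subset_right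
    rintro b ⟨⟨vb, hvb⟩, hb2⟩
    exact ⟨vb, hroot₁ vb (h₁.label_mem hvb), hvb⟩
  have hcomCC : com T₁ T₂ ∈ CC T₁ T₂ := Or.inl (mem_clusterRep_iff.mpr ⟨r₁, hr₁R, hclr⟩)
  obtain ⟨ρ, hρ, hρc, hρp⟩ := gpos_surj h₁ h₂ hscl hcomCC
    (gtop_pos h₁ h₂ hscl hcomCC) (le_refl _)
  have hreach : ∀ z, Kept T₁ T₂ z → (glueTree T₁ T₂).path ρ z := by
    intro z hz
    refine glue_reach h₁ h₂ hscl hcmp ((clus T₁ T₂ ρ).ncard) ρ z hρ hz ?_ ?_ le_rfl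
    · rw [hρc]; exact clus_subset_com hz
    · intro hce
      have := gpos_le_top h₁ h₂ hscl hz
      rw [hce, hρc] at this
      rw [hρp]
      exact this
  refine ⟨ρ, kept_mem_nodes hρ, ?_⟩
  intro z hz
  rcases mem_nodes_cases hz with hk | hrem
  · exact hreach z hk
  · cases z with
    | inl v =>
      have claim1 : ∀ v, T₁.path r₁ v → (glueTree T₁ T₂).path ρ (Sum.inl v) := by
        intro v hp
        induction hp with
        | refl => exact hreach _ hr₁R
        | tail hp' harc ih =>
          rename_i b c
          by_cases hcR : c ∈ (R1 T₁ T₂).nodes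
          · exact hreach _ hcR
          · exact Relation.ReflTransGen.tail ih (Or.inr (Or.inl ⟨b, c, rfl, rfl, harc, hcR⟩))
      exact claim1 v (hroot₁ v hrem.1)
    | inr w =>
      have claim2 : ∀ w, T₂.path r₂ w → (glueTree T₁ T₂).path ρ (emb2 T₁ T₂ w) := by
        intro w hp
        induction hp with
        | refl => exact hreach _ (emb2_kept h₁ h₂ hscl hr₂R).1
        | tail hp' harc ih =>
          rename_i b c
          by_cases hcR : c ∈ (R2 T₁ T₂).nodes
          · exact hreach _ (emb2_kept h₁ h₂ hscl hcR).1
          · have hnm : ¬ Merged T₁ T₂ c := fun hm => hcR (merged_mem h₂ hm)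
            rw [emb2_of_not_merged hnm]
            exact Relation.ReflTransGen.tail ih (Or.inr (Or.inr ⟨b, c, rfl, rfl, harc, hcR⟩))
      have := claim2 w (hroot₂ w hrem.1)
      have hnm : ¬ Merged T₁ T₂ w := fun hm => hrem.2 (merged_mem h₂ hm)
      rwa [emb2_of_not_merged hnm] at this

lemma glue_leaf_labeled (h₁ : T₁.IsATree) (h₂ : T₂.IsATree) (hscl : SclH T₁ T₂)
    {z : V ⊕ W} (hz : z ∈ (glueTree T₁ T₂).nodes)
    (hleaf : ∀ y, ¬ (glueTree T₁ T₂).arc z y) :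
    ∃ a, (glueTree T₁ T₂).label z = some a := by
  classical
  rcases mem_nodes_cases hz with hk | hrem
  · -- z is kept
    have hpos1 : gpos T₁ T₂ z = 1 := by
      by_contra hne
      have h2 : 2 ≤ gpos T₁ T₂ z := by
        have := gpos_ge_one h₁ h₂ hscl hk; omega
      obtain ⟨y, hky, hyc, hyp⟩ := gpos_surj h₁ h₂ hscl (clus_mem_CC hk)
        (p := gpos T₁ T₂ z - 1) (by omega)
        (by have := gpos_le_top h₁ h₂ hscl hk; omega)
      exact hleaf y (Or.inl ⟨hk, hky, Or.inl ⟨hyc.symm, by omega⟩⟩)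
    have hnosub : ¬ ∃ Z ∈ CC T₁ T₂, Z ⊂ clus T₁ T₂ z := by
      rintro ⟨Z, hZCC, hZss⟩
      set M : Set (Set α) := {Z' | Z' ∈ CC T₁ T₂ ∧ Z ⊆ Z' ∧ Z' ⊂ clus T₁ T₂ z} with hM
      have hMne : M.Nonempty := ⟨Z, hZCC, le_refl _, hZss⟩
      have hMfin : M.Finite := (CC_finite h₁ h₂).subset (fun Z' hZ' => hZ'.1)
      obtain ⟨Z', hZ'M, hmax⟩ : ∃ Z' ∈ M, ∀ Z'' ∈ M, id Z' ≤ id Z'' → id Z' = id Z'' := by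
        obtain ⟨i, hi⟩ := hMfin.exists_maximal hMne
        exact ⟨i, hi.prop, fun Z'' h hle => hi.eq_of_le h hle⟩
      obtain ⟨hZ'CC, hZ'Z, hZ'z⟩ := hZ'M
      obtain ⟨t, ht, htc, htp⟩ := gpos_surj h₁ h₂ hscl hZ'CC
        (gtop_pos h₁ h₂ hscl hZ'CC) (le_refl _)
      refine hleaf t (Or.inl ⟨hk, ht, Or.inr ⟨hpos1, by rw [htc]; exact hZ'z,
        by rw [htc]; exact htp, ?_⟩⟩)
      rintro ⟨Z'', hZ''CC, hZ''1, hZ''2⟩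
      rw [htc] at hZ''1
      have hZ''M : Z'' ∈ M := ⟨hZ''CC, hZ'Z.trans hZ''1.subset, hZ''2⟩
      have := hmax Z'' hZ''M hZ''1.subset
      exact hZ''1.ne (by simpa using this)
    cases z with
    | inl v =>
      obtain ⟨a, ha⟩ := restrict_cluster_nonempty (T := T₁) (X := com T₁ T₂) hk
      obtain ⟨wa, hwa_path, hwa_lab⟩ := ha
      have hwa_mem : wa ∈ (R1 T₁ T₂).nodes := (hR1 h₁).label_mem hwa_lab
      have hsub := cluster_mono (T := R1 T₁ T₂) hwa_path
      have hwc : (R1 T₁ T₂).cluster wa = (R1 T₁ T₂).cluster v := by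
        by_contra hne
        exact hnosub ⟨(R1 T₁ T₂).cluster wa, Or.inl (mem_clusterRep_iff.mpr ⟨wa, hwa_mem, rfl⟩),
          HasSubset.Subset.ssubset_of_ne hsub hne⟩
      have hveq : v = wa := by
        by_contra hne
        have hNT := path_pathNT hwa_path hne
        have := chainIdx_lt (hR1 h₁) hwa_mem hwc hNT
        have h1 := chainIdx_pos (R1 T₁ T₂) wa
        simp only [gpos, Sum.elim_inl] at hpos1
        omega
      rw [hveq]
      exact ⟨a, (restrict_label_iff.mp hwa_lab).2⟩
    | inr w =>
      exfalso
      obtain ⟨a, ha⟩ := restrict_cluster_nonempty (T := T₂) (X := com T₁ T₂) hk.1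
      obtain ⟨wa, hwa_path, hwa_lab⟩ := ha
      have hwa_mem : wa ∈ (R2 T₁ T₂).nodes := (hR2 h₂).label_mem hwa_lab
      have hsub := cluster_mono (T := R2 T₁ T₂) hwa_path
      have hwc : (R2 T₁ T₂).cluster wa = (R2 T₁ T₂).cluster w := by
        by_contra hne
        exact hnosub ⟨(R2 T₁ T₂).cluster wa, Or.inr (mem_clusterRep_iff.mpr ⟨wa, hwa_mem, rfl⟩),
          HasSubset.Subset.ssubset_of_ne hsub hne⟩
      have hveq : w = wa := by
        by_contra hne
        have hNT := path_pathNT hwa_path hne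
        have := chainIdx_lt (hR2 h₂) hwa_mem hwc hNT
        have h1 := chainIdx_pos (R2 T₁ T₂) wa
        have h2 := mnum_le_k1 h₁ h₂ hscl (Y := (R2 T₁ T₂).cluster w)
        simp only [gpos, Sum.elim_inr] at hpos1
        omega
      obtain ⟨haC, hTW⟩ := restrict_label_iff.mp hwa_lab
      obtain ⟨vb, hvb⟩ := haC.1
      exact hk.2 ⟨vb, a, hvb, hveq ▸ hTW, haC⟩
  · -- z is removed
    cases z with
    | inl v =>
      have hlf : ∀ u, ¬ T₁.arc v u := by
        intro u harc
        refine hleaf (Sum.inl u) (Or.inr (Or.inl ⟨v, u, rfl, rfl, harc, ?_⟩))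
        intro huR
        obtain ⟨b, hb, hbc⟩ := huR.2
        exact hrem.2 ⟨hrem.1, ⟨b, cluster_mono (arc_path harc) hb, hbc⟩⟩
      obtain ⟨a, ha⟩ := h₁.leaf_labeled v hrem.1 hlf
      exact ⟨a, ha⟩
    | inr w =>
      have hnm : ¬ Merged T₁ T₂ w := fun hm => hrem.2 (merged_mem h₂ hm)
      have hlf : ∀ u, ¬ T₂.arc w u := by
        intro u harc
        refine hleaf (Sum.inr u) (Or.inr (Or.inr ⟨w, u, (emb2_of_not_merged hnm).symm, rfl,
          harc, ?_⟩))
        intro huR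
        obtain ⟨b, hb, hbc⟩ := huR.2
        exact hrem.2 ⟨hrem.1, ⟨b, cluster_mono (arc_path harc) hb, hbc⟩⟩
      obtain ⟨a, ha⟩ := h₂.leaf_labeled w hrem.1 hlf
      refine ⟨a, ?_⟩
      simp only [glueTree, Sum.elim_inr, if_neg hnm]
      exact ha

lemma glue_isATree (h₁ : T₁.IsATree) (h₂ : T₂.IsATree) (hscl : SclH T₁ T₂)
    (hcmp : CmpH T₁ T₂) (hcom : (com T₁ T₂).Nonempty) : (glueTree T₁ T₂).IsATree := by
  constructor
  · exact glue_finite h₁ h₂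
  · exact fun h => glue_arc_mem_left h₁ h₂ h
  · exact fun h => glue_arc_mem_right h₁ h₂ h
  · exact fun hu hv => glue_parent_unique h₁ h₂ hscl hcmp hu hv
  · exact fun h hp => glue_acyclic h₁ h₂ hscl h hp
  · exact fun _ => glue_rooted h₁ h₂ hscl hcmp hcom
  · exact fun h => glue_label_mem h₁ h₂ h
  · exact fun hu hv => glue_label_inj h₁ h₂ hu hv
  · exact fun z hz hleaf => glue_leaf_labeled h₁ h₂ hscl hz hleaf

end Glue6

end PreTree
namespace PreTree

section Glue7

variable {α V W : Type}
variable {T₁ : PreTree α V} {T₂ : PreTree α W}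

/-- Decomposition of a path from a kept node to a non-kept node. -/
lemma kept_to_rem (hpath : (glueTree T₁ T₂).path x y) (hx : Kept T₁ T₂ x)
    (hny : ¬ Kept T₁ T₂ y) :
    ∃ p q, Kept T₁ T₂ p ∧ (glueTree T₁ T₂).path x p ∧ (glueTree T₁ T₂).arc p q ∧
      ¬ Kept T₁ T₂ q ∧ (glueTree T₁ T₂).path q y := by
  classical
  induction hpath using Relation.ReflTransGen.head_induction_on with
  | refl => exact absurd hx hny
  | head harc hp ih =>
    rename_i x' z
    by_cases hkz : Kept T₁ T₂ z
    · obtain ⟨p, q, h1, h2, h3, h4, h5⟩ := ih hkz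
      exact ⟨p, q, h1, Relation.ReflTransGen.head harc h2, h3, h4, h5⟩
    · exact ⟨x', z, hx, path_refl _ x', harc, hkz, hp⟩

lemma wte1_step (h₁ : T₁.IsATree) (h₂ : T₂.IsATree) (hscl : SclH T₁ T₂) (hcmp : CmpH T₁ T₂)
    {b c : V} (harc : T₁.arc b c) : (glueTree T₁ T₂).path (Sum.inl b) (Sum.inl c) := by
  classical
  by_cases hcR : c ∈ (R1 T₁ T₂).nodes
  · have hbR : b ∈ (R1 T₁ T₂).nodes := by
      obtain ⟨x, hx, hxc⟩ := hcR.2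
      exact ⟨h₁.arc_mem_left harc, ⟨x, cluster_mono (arc_path harc) hx, hxc⟩⟩
    have hR1arc : (R1 T₁ T₂).arc b c := ⟨harc, hbR.2, hcR.2⟩
    have hsub : (R1 T₁ T₂).cluster c ⊆ (R1 T₁ T₂).cluster b :=
      cluster_mono (arc_path (T := R1 T₁ T₂) hR1arc)
    refine glue_reach h₁ h₂ hscl hcmp ((clus T₁ T₂ (Sum.inl b)).ncard) _ _ hbR hcR hsub
      ?_ le_rfl
    intro hce
    simp only [clus, Sum.elim_inl] at hce
    have hNT : (R1 T₁ T₂).pathNT b c := Relation.TransGen.single hR1arc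
    have := chainIdx_lt (hR1 h₁) hcR hce hNT
    simp only [gpos, Sum.elim_inl]
    omega
  · exact arc_path (Or.inr (Or.inl ⟨b, c, rfl, rfl, harc, hcR⟩))

lemma wte1_back_kept (h₁ : T₁.IsATree) (h₂ : T₂.IsATree) {u v : V}
    (hu : u ∈ (R1 T₁ T₂).nodes) (hv : v ∈ (R1 T₁ T₂).nodes)
    (hpath : (glueTree T₁ T₂).path (Sum.inl u) (Sum.inl v)) : T₁.path u v := by
  obtain ⟨hsub, hposle⟩ := kept_invariant h₁ h₂ hpath hv
  simp only [clus, Sum.elim_inl] at hsub hposle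
  obtain ⟨b, hb⟩ := restrict_cluster_nonempty hv
  rcases comparable_of_mem_cluster (hR1 h₁) (hsub hb) hb with h | h
  · exact restrict_path h
  · have hsub' : (R1 T₁ T₂).cluster u ⊆ (R1 T₁ T₂).cluster v := cluster_mono h
    have hceq : (R1 T₁ T₂).cluster u = (R1 T₁ T₂).cluster v :=
      Set.Subset.antisymm hsub' hsub
    by_cases heq : v = u
    · rw [heq]; exact path_refl T₁ u
    · exfalso
      have hNT : (R1 T₁ T₂).pathNT v u := path_pathNT h heq
      have := chainIdx_lt (hR1 h₁) hu hceq hNT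
      have := hposle hceq.symm
      simp only [gpos, Sum.elim_inl] at this
      omega

lemma glue_wte1 (h₁ : T₁.IsATree) (h₂ : T₂.IsATree) (hscl : SclH T₁ T₂)
    (hcmp : CmpH T₁ T₂) : IsWTE T₁ (glueTree T₁ T₂) Sum.inl := by
  refine ⟨fun v hv => glue_mem_inl.mpr hv, fun u _ v _ h => Sum.inl.inj h,
    fun v a h => h, ?_⟩
  intro u hu v hv
  constructor
  · intro hpath
    induction hpath with
    | refl => exact path_refl _ _
    | tail hp harc ih =>
      exact path_trans (ih (h₁.arc_mem_left harc)) (wte1_step h₁ h₂ hscl hcmp harc)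
  · intro hpath
    classical
    by_cases huR : u ∈ (R1 T₁ T₂).nodes
    · by_cases hvR : v ∈ (R1 T₁ T₂).nodes
      · exact wte1_back_kept h₁ h₂ huR hvR hpath
      · have hnkv : ¬ Kept T₁ T₂ (Sum.inl v) := hvR
        obtain ⟨p, q, hkp, hp1, harc, hnkq, hp2⟩ := kept_to_rem hpath huR hnkv
        rcases harc with ⟨-, hkq, -⟩ | ⟨a, a', ha, ha', harc', hnr⟩ | ⟨b, b', hb, hb', harc', hnr⟩
        · exact absurd hkq hnkq
        · subst ha; subst ha'
          have hT1ub : T₁.path u a := wte1_back_kept h₁ h₂ huR hkp hp1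
          obtain ⟨v', hv', hpv', -, -⟩ :=
            rem_path_l h₁ h₂ hp2 a' rfl (h₁.arc_mem_right harc') hnr
          have : v' = v := Sum.inl.inj hv'.symm
          subst this
          exact path_trans hT1ub (Relation.ReflTransGen.head harc' hpv')
        · subst hb'
          obtain ⟨w'', hw'', -, -, -⟩ :=
            rem_path_r h₁ h₂ hp2 b' rfl (h₂.arc_mem_right harc') hnr
          exact absurd hw'' (by simp)
    · obtain ⟨v', hv', hpv', -, -⟩ := rem_path_l h₁ h₂ hpath u rfl hu huR
      have : v' = v := Sum.inl.inj hv'.symm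
      subst this
      exact hpv'

lemma wte2_step (h₁ : T₁.IsATree) (h₂ : T₂.IsATree) (hscl : SclH T₁ T₂) (hcmp : CmpH T₁ T₂)
    {b c : W} (harc : T₂.arc b c) :
    (glueTree T₁ T₂).path (emb2 T₁ T₂ b) (emb2 T₁ T₂ c) := by
  classical
  by_cases hcR : c ∈ (R2 T₁ T₂).nodes
  · have hbR : b ∈ (R2 T₁ T₂).nodes := by
      obtain ⟨x, hx, hxc⟩ := hcR.2
      exact ⟨h₂.arc_mem_left harc, ⟨x, cluster_mono (arc_path harc) hx, hxc⟩⟩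
    have hR2arc : (R2 T₁ T₂).arc b c := ⟨harc, hbR.2, hcR.2⟩
    have hsub : (R2 T₁ T₂).cluster c ⊆ (R2 T₁ T₂).cluster b :=
      cluster_mono (arc_path (T := R2 T₁ T₂) hR2arc)
    obtain ⟨hkb, hcb⟩ := emb2_kept h₁ h₂ hscl hbR
    obtain ⟨hkc, hcc⟩ := emb2_kept h₁ h₂ hscl hcR
    refine glue_reach h₁ h₂ hscl hcmp ((clus T₁ T₂ (emb2 T₁ T₂ b)).ncard) _ _ hkb hkc
      (by rw [hcb, hcc]; exact hsub) ?_ le_rfl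
    intro hce
    rw [hcb, hcc] at hce
    have hNT : (R2 T₁ T₂).pathNT b c := Relation.TransGen.single hR2arc
    have hidx := chainIdx_lt (hR2 h₂) hcR hce hNT
    exact le_of_lt (emb2_gpos_lt h₁ h₂ hscl hcR hbR hce hidx)
  · have hnm : ¬ Merged T₁ T₂ c := fun hm => hcR (merged_mem h₂ hm)
    rw [emb2_of_not_merged hnm]
    exact arc_path (Or.inr (Or.inr ⟨b, c, rfl, rfl, harc, hcR⟩))

lemma wte2_back_kept (h₁ : T₁.IsATree) (h₂ : T₂.IsATree) (hscl : SclH T₁ T₂) {u v : W}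
    (hu : u ∈ (R2 T₁ T₂).nodes) (hv : v ∈ (R2 T₁ T₂).nodes)
    (hpath : (glueTree T₁ T₂).path (emb2 T₁ T₂ u) (emb2 T₁ T₂ v)) : T₂.path u v := by
  obtain ⟨hku, hcu⟩ := emb2_kept h₁ h₂ hscl hu
  obtain ⟨hkv, hcv⟩ := emb2_kept h₁ h₂ hscl hv
  obtain ⟨hsub, hposle⟩ := kept_invariant h₁ h₂ hpath hkv
  rw [hcu, hcv] at hsub hposle
  obtain ⟨b, hb⟩ := restrict_cluster_nonempty hv
  rcases comparable_of_mem_cluster (hR2 h₂) (hsub hb) hb with h | h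
  · exact restrict_path h
  · have hsub' : (R2 T₁ T₂).cluster u ⊆ (R2 T₁ T₂).cluster v := cluster_mono h
    have hceq : (R2 T₁ T₂).cluster u = (R2 T₁ T₂).cluster v :=
      Set.Subset.antisymm hsub' hsub
    by_cases heq : v = u
    · rw [heq]; exact path_refl T₂ u
    · exfalso
      have hNT : (R2 T₁ T₂).pathNT v u := path_pathNT h heq
      have hidx := chainIdx_lt (hR2 h₂) hu hceq hNT
      have := emb2_gpos_lt h₁ h₂ hscl hu hv hceq hidx
      have := hposle hceq.symm
      omega

lemma glue_wte2 (h₁ : T₁.IsATree) (h₂ : T₂.IsATree) (hscl : SclH T₁ T₂)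
    (hcmp : CmpH T₁ T₂) : IsWTE T₂ (glueTree T₁ T₂) (emb2 T₁ T₂) := by
  refine ⟨fun w hw => emb2_mem_nodes h₁ hw, fun u _ v _ h => emb2_inj h₁ h₂ h,
    fun w a h => by rw [emb2_label]; exact h, ?_⟩
  intro u hu v hv
  constructor
  · intro hpath
    induction hpath with
    | refl => exact path_refl _ _
    | tail hp harc ih =>
      exact path_trans (ih (h₂.arc_mem_left harc)) (wte2_step h₁ h₂ hscl hcmp harc)
  · intro hpath
    classical
    by_cases huR : u ∈ (R2 T₁ T₂).nodes
    · by_cases hvR : v ∈ (R2 T₁ T₂).nodes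
      · exact wte2_back_kept h₁ h₂ hscl huR hvR hpath
      · have hnmv : ¬ Merged T₁ T₂ v := fun hm => hvR (merged_mem h₂ hm)
        have hembv : emb2 T₁ T₂ v = Sum.inr v := emb2_of_not_merged hnmv
        have hnkv : ¬ Kept T₁ T₂ (emb2 T₁ T₂ v) := by
          rw [hembv]; exact fun hk => hvR hk.1
        obtain ⟨p, q, hkp, hp1, harc, hnkq, hp2⟩ :=
          kept_to_rem hpath (emb2_kept h₁ h₂ hscl huR).1 hnkv
        rcases harc with ⟨-, hkq, -⟩ | ⟨a, a', ha, ha', harc', hnr⟩ | ⟨b, b', hb, hb', harc', hnr⟩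
        · exact absurd hkq hnkq
        · subst ha'
          obtain ⟨v'', hv'', -, -, -⟩ :=
            rem_path_l h₁ h₂ hp2 a' rfl (h₁.arc_mem_right harc') hnr
          rw [hembv] at hv''
          exact absurd hv'' (by simp)
        · subst hb'
          have hbR : b ∈ (R2 T₁ T₂).nodes := by
            rw [hb] at hkp
            by_cases hmb : Merged T₁ T₂ b
            · exact merged_mem h₂ hmb
            · rw [emb2_of_not_merged hmb] at hkp
              exact hkp.1
          rw [hb] at hp1
          have hT2ub : T₂.path u b := wte2_back_kept h₁ h₂ hscl huR hbR hp1
          obtain ⟨w', hw', hpw', -, -⟩ :=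
            rem_path_r h₁ h₂ hp2 b' rfl (h₂.arc_mem_right harc') hnr
          rw [hembv] at hw'
          have : w' = v := Sum.inr.inj hw'.symm
          subst this
          exact path_trans hT2ub (Relation.ReflTransGen.head harc' hpw')
    · have hnmu : ¬ Merged T₁ T₂ u := fun hm => huR (merged_mem h₂ hm)
      rw [emb2_of_not_merged hnmu] at hpath
      obtain ⟨v', hv', hpv', -, -⟩ := rem_path_r h₁ h₂ hpath u rfl hu huR
      by_cases hmv : Merged T₁ T₂ v
      · obtain ⟨vb, c, he', -, -, -⟩ := emb2_of_merged hmv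
        rw [he'] at hv'
        exact absurd hv' (by simp)
      · rw [emb2_of_not_merged hmv] at hv'
        have : v' = v := Sum.inr.inj hv'.symm
        subst this
        exact hpv'

end Glue7

end PreTree
namespace PreTree

section Degenerate

variable {α V W U : Type}

/-- Relocating a tree along an injection. -/
def pushTree (S : PreTree α V) (f : V → U) (lab : U → Option α) : PreTree α U where
  nodes := f '' S.nodes
  arc x y := ∃ u v, S.arc u v ∧ x = f u ∧ y = f v
  label := lab

lemma push_path_forward {S : PreTree α V} {f : V → U} {lab : U → Option α} {u v : V}
    (h : S.path u v) : (pushTree S f lab).path (f u) (f v) := by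
  induction h with
  | refl => exact path_refl _ _
  | tail hp harc ih => exact Relation.ReflTransGen.tail ih ⟨_, _, harc, rfl, rfl⟩

lemma push_path_back {S : PreTree α V} {f : V → U} {lab : U → Option α}
    (hf : Function.Injective f) {x y : U} (h : (pushTree S f lab).path x y) :
    ∀ u, x = f u → ∃ v, y = f v ∧ S.path u v := by
  induction h with
  | refl => exact fun u hu => ⟨u, hu, path_refl _ _⟩
  | tail hp harc ih =>
    intro u hu
    obtain ⟨v, rfl, hpath⟩ := ih u hu
    obtain ⟨a, b, harc', ha, hb⟩ := harc
    have : a = v := hf ha.symm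
    subst this
    exact ⟨b, hb, Relation.ReflTransGen.tail hpath harc'⟩

lemma push_isATree {S : PreTree α V} {f : V → U} {lab : U → Option α}
    (hS : S.IsATree) (hf : Function.Injective f)
    (hlabf : ∀ v, lab (f v) = S.label v)
    (hlab0 : ∀ x, (∀ v, x ≠ f v) → lab x = none) :
    (pushTree S f lab).IsATree := by
  classical
  have hgetF : ∀ (x : U) (a : α), lab x = some a → ∃ v, x = f v := by
    intro x a hx
    by_contra hcon
    push_neg at hcon
    rw [hlab0 x hcon] at hx
    exact absurd hx (by simp)
  constructor
  · exact hS.finite_nodes.image f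
  · rintro x y ⟨u, v, harc, rfl, rfl⟩
    exact ⟨u, hS.arc_mem_left harc, rfl⟩
  · rintro x y ⟨u, v, harc, rfl, rfl⟩
    exact ⟨v, hS.arc_mem_right harc, rfl⟩
  · rintro x x' y ⟨u, v, harc, rfl, rfl⟩ ⟨u', v', harc', rfl, hv⟩
    have : v' = v := hf hv.symm
    subst this
    rw [hS.parent_unique harc harc']
  · rintro x y ⟨u, v, harc, rfl, rfl⟩ hp
    obtain ⟨v', hv', hpath⟩ := push_path_back hf hp v rfl
    have : v' = u := hf hv'.symm
    subst this
    exact hS.acyclic harc hpath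
  · rintro ⟨x, v, hv, rfl⟩
    obtain ⟨r, hr, hroot⟩ := hS.rooted ⟨v, hv⟩
    refine ⟨f r, ⟨r, hr, rfl⟩, ?_⟩
    rintro z ⟨u, hu, rfl⟩
    exact push_path_forward (hroot u hu)
  · intro x a hx
    obtain ⟨v, rfl⟩ := hgetF x a hx
    have hx' : lab (f v) = some a := hx
    rw [hlabf] at hx'
    exact ⟨v, hS.label_mem hx', rfl⟩
  · intro x y a hx hy
    obtain ⟨u, rfl⟩ := hgetF x a hx
    obtain ⟨v, rfl⟩ := hgetF y a hy
    have hx' : lab (f u) = some a := hx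
    have hy' : lab (f v) = some a := hy
    rw [hlabf] at hx' hy'
    rw [hS.label_inj hx' hy']
  · rintro x ⟨v, hv, rfl⟩ hleaf
    have : ∀ u, ¬ S.arc v u := by
      intro u harc
      exact hleaf (f u) ⟨v, u, harc, rfl, rfl⟩
    obtain ⟨a, ha⟩ := hS.leaf_labeled v hv this
    exact ⟨a, show lab (f v) = some a by rw [hlabf]; exact ha⟩

lemma push_wte {S : PreTree α V} {f : V → U} {lab : U → Option α}
    (hf : Function.Injective f) (hlabf : ∀ v, lab (f v) = S.label v) :
    IsWTE S (pushTree S f lab) f := by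
  refine ⟨fun v hv => ⟨v, hv, rfl⟩, fun u _ v _ h => hf h,
    fun v a h => show lab (f v) = some a by rw [hlabf]; exact h, ?_⟩
  intro u hu v hv
  constructor
  · exact push_path_forward
  · intro hp
    obtain ⟨v', hv', hpath⟩ := push_path_back hf hp u rfl
    have : v' = v := hf hv'.symm
    subst this
    exact hpath

lemma wte_of_empty {S : PreTree α V} {T : PreTree α U} (hS : S.IsATree)
    (h : S.nodes = ∅) (f : V → U) : IsWTE S T f := by
  refine ⟨fun v hv => absurd (h ▸ hv) (Set.notMem_empty v),
    fun u hu => absurd (h ▸ hu) (Set.notMem_empty u),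
    fun v a hv => absurd (h ▸ hS.label_mem hv) (Set.notMem_empty v),
    fun u hu => absurd (h ▸ hu) (Set.notMem_empty u)⟩

/-- The disjoint union of two trees under a fresh common root. -/
def disjTree (T₁ : PreTree α V) (T₂ : PreTree α W) (r₁ : V) (r₂ : W) :
    PreTree α (Option (V ⊕ W)) where
  nodes := insert none ((fun v => some (Sum.inl v)) '' T₁.nodes ∪
    (fun w => some (Sum.inr w)) '' T₂.nodes)
  arc x y :=
    (∃ u v, T₁.arc u v ∧ x = some (Sum.inl u) ∧ y = some (Sum.inl v)) ∨
    (∃ u v, T₂.arc u v ∧ x = some (Sum.inr u) ∧ y = some (Sum.inr v)) ∨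
    (x = none ∧ (y = some (Sum.inl r₁) ∨ y = some (Sum.inr r₂)))
  label x := Option.elim x none (Sum.elim T₁.label T₂.label)

variable {T₁ : PreTree α V} {T₂ : PreTree α W} {r₁ : V} {r₂ : W}

lemma disj_path_back_l {x y : Option (V ⊕ W)} (h : (disjTree T₁ T₂ r₁ r₂).path x y) :
    ∀ u, x = some (Sum.inl u) → ∃ v, y = some (Sum.inl v) ∧ T₁.path u v := by
  induction h with
  | refl => exact fun u hu => ⟨u, hu, path_refl _ _⟩
  | tail hp harc ih =>
    intro u hu
    obtain ⟨v, rfl, hpath⟩ := ih u hu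
    rcases harc with ⟨a, b, harc', ha, hb⟩ | ⟨a, b, harc', ha, hb⟩ | ⟨ha, -⟩
    · have : a = v := by simpa using ha.symm
      subst this
      exact ⟨b, hb, Relation.ReflTransGen.tail hpath harc'⟩
    · exact absurd ha (by simp)
    · exact absurd ha (by simp)

lemma disj_path_back_r {x y : Option (V ⊕ W)} (h : (disjTree T₁ T₂ r₁ r₂).path x y) :
    ∀ u, x = some (Sum.inr u) → ∃ v, y = some (Sum.inr v) ∧ T₂.path u v := by
  induction h with
  | refl => exact fun u hu => ⟨u, hu, path_refl _ _⟩
  | tail hp harc ih =>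
    intro u hu
    obtain ⟨v, rfl, hpath⟩ := ih u hu
    rcases harc with ⟨a, b, harc', ha, hb⟩ | ⟨a, b, harc', ha, hb⟩ | ⟨ha, -⟩
    · exact absurd ha (by simp)
    · have : a = v := by simpa using ha.symm
      subst this
      exact ⟨b, hb, Relation.ReflTransGen.tail hpath harc'⟩
    · exact absurd ha (by simp)

lemma disj_path_none {x : Option (V ⊕ W)} (h : (disjTree T₁ T₂ r₁ r₂).path x none) :
    x = none := by
  induction h using Relation.ReflTransGen.head_induction_on with
  | refl => rfl
  | head harc hp ih =>
    exfalso
    rw [ih] at harc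
    rcases harc with ⟨a, b, -, -, hb⟩ | ⟨a, b, -, -, hb⟩ | ⟨-, hb | hb⟩ <;>
      exact absurd hb (by simp)

lemma disj_path_forward_l {u v : V} (h : T₁.path u v) :
    (disjTree T₁ T₂ r₁ r₂).path (some (Sum.inl u)) (some (Sum.inl v)) := by
  induction h with
  | refl => exact path_refl _ _
  | tail hp harc ih =>
    exact Relation.ReflTransGen.tail ih (Or.inl ⟨_, _, harc, rfl, rfl⟩)

lemma disj_path_forward_r {u v : W} (h : T₂.path u v) :
    (disjTree T₁ T₂ r₁ r₂).path (some (Sum.inr u)) (some (Sum.inr v)) := by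
  induction h with
  | refl => exact path_refl _ _
  | tail hp harc ih =>
    exact Relation.ReflTransGen.tail ih (Or.inr (Or.inl ⟨_, _, harc, rfl, rfl⟩))

lemma root_no_parent {T : PreTree α V} (hT : T.IsATree) {r : V}
    (hroot : ∀ v ∈ T.nodes, T.path r v) {u : V} (h : T.arc u r) : False :=
  hT.acyclic h (hroot u (hT.arc_mem_left h))

lemma disj_isATree (h₁ : T₁.IsATree) (h₂ : T₂.IsATree)
    (hcom : T₁.labelSet ∩ T₂.labelSet = ∅)
    (hr₁ : r₁ ∈ T₁.nodes) (hroot₁ : ∀ v ∈ T₁.nodes, T₁.path r₁ v)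
    (hr₂ : r₂ ∈ T₂.nodes) (hroot₂ : ∀ w ∈ T₂.nodes, T₂.path r₂ w) :
    (disjTree T₁ T₂ r₁ r₂).IsATree := by
  constructor
  · exact Set.Finite.insert none ((h₁.finite_nodes.image _).union (h₂.finite_nodes.image _))
  · rintro x y (⟨u, v, harc, rfl, -⟩ | ⟨u, v, harc, rfl, -⟩ | ⟨rfl, -⟩)
    · exact Or.inr (Or.inl ⟨u, h₁.arc_mem_left harc, rfl⟩)
    · exact Or.inr (Or.inr ⟨u, h₂.arc_mem_left harc, rfl⟩)
    · exact Or.inl rfl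
  · rintro x y (⟨u, v, harc, -, rfl⟩ | ⟨u, v, harc, -, rfl⟩ | ⟨-, rfl | rfl⟩)
    · exact Or.inr (Or.inl ⟨v, h₁.arc_mem_right harc, rfl⟩)
    · exact Or.inr (Or.inr ⟨v, h₂.arc_mem_right harc, rfl⟩)
    · exact Or.inr (Or.inl ⟨r₁, hr₁, rfl⟩)
    · exact Or.inr (Or.inr ⟨r₂, hr₂, rfl⟩)
  · rintro x x' y
      (⟨u, v, harc, rfl, rfl⟩ | ⟨u, v, harc, rfl, rfl⟩ | ⟨rfl, rfl | rfl⟩) <;>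
      rintro (⟨u', v', harc', rfl, hv⟩ | ⟨u', v', harc', rfl, hv⟩ | ⟨rfl, hv | hv⟩)
    · have : v' = v := by simpa using hv.symm
      subst this
      rw [h₁.parent_unique harc harc']
    · exact absurd hv (by simp)
    · exfalso
      have : v = r₁ := by simpa using hv
      subst this
      exact root_no_parent h₁ hroot₁ harc
    · exact absurd hv (by simp)
    · exact absurd hv (by simp)
    · have : v' = v := by simpa using hv.symm
      subst this
      rw [h₂.parent_unique harc harc']
    · exact absurd hv (by simp)
    · exfalso
      have : v = r₂ := by simpa using hv
      subst this
      exact root_no_parent h₂ hroot₂ harc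
    · exfalso
      have : v' = r₁ := by simpa using hv.symm
      subst this
      exact root_no_parent h₁ hroot₁ harc'
    · exact absurd hv (by simp)
    · rfl
    · exact absurd hv (by simp)
    · exact absurd hv (by simp)
    · exfalso
      have : v' = r₂ := by simpa using hv.symm
      subst this
      exact root_no_parent h₂ hroot₂ harc'
    · exact absurd hv (by simp)
    · rfl
  · rintro x y (⟨u, v, harc, rfl, rfl⟩ | ⟨u, v, harc, rfl, rfl⟩ | ⟨rfl, rfl | rfl⟩) hp
    · obtain ⟨v', hv', hpath⟩ := disj_path_back_l hp v rfl
      have : v' = u := by simpa using hv'.symm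
      subst this
      exact h₁.acyclic harc hpath
    · obtain ⟨v', hv', hpath⟩ := disj_path_back_r hp v rfl
      have : v' = u := by simpa using hv'.symm
      subst this
      exact h₂.acyclic harc hpath
    · exact absurd (disj_path_none hp) (by simp)
    · exact absurd (disj_path_none hp) (by simp)
  · intro _
    refine ⟨none, Or.inl rfl, ?_⟩
    rintro z (rfl | ⟨v, hv, rfl⟩ | ⟨w, hw, rfl⟩)
    · exact path_refl _ _
    · refine Relation.ReflTransGen.head (Or.inr (Or.inr ⟨rfl, Or.inl rfl⟩)) ?_
      exact disj_path_forward_l (hroot₁ v hv)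
    · refine Relation.ReflTransGen.head (Or.inr (Or.inr ⟨rfl, Or.inr rfl⟩)) ?_
      exact disj_path_forward_r (hroot₂ w hw)
  · intro x a hx
    match x with
    | none => exact absurd hx (by simp [disjTree])
    | some (Sum.inl v) =>
      exact Or.inr (Or.inl ⟨v, h₁.label_mem hx, rfl⟩)
    | some (Sum.inr w) =>
      exact Or.inr (Or.inr ⟨w, h₂.label_mem hx, rfl⟩)
  · intro x y a hx hy
    match x, y with
    | none, _ => exact absurd hx (by simp [disjTree])
    | _, none => exact absurd hy (by simp [disjTree])
    | some (Sum.inl u), some (Sum.inl v) =>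
      have := h₁.label_inj (show T₁.label u = some a from hx) (show T₁.label v = some a from hy)
      rw [this]
    | some (Sum.inr u), some (Sum.inr v) =>
      have := h₂.label_inj (show T₂.label u = some a from hx) (show T₂.label v = some a from hy)
      rw [this]
    | some (Sum.inl u), some (Sum.inr v) =>
      exfalso
      have : a ∈ T₁.labelSet ∩ T₂.labelSet := ⟨⟨u, hx⟩, ⟨v, hy⟩⟩
      rw [hcom] at this
      exact this
    | some (Sum.inr u), some (Sum.inl v) =>
      exfalso
      have : a ∈ T₁.labelSet ∩ T₂.labelSet := ⟨⟨v, hy⟩, ⟨u, hx⟩⟩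
      rw [hcom] at this
      exact this
  · rintro x (rfl | ⟨v, hv, rfl⟩ | ⟨w, hw, rfl⟩) hleaf
    · exact absurd (Or.inr (Or.inr ⟨rfl, Or.inl rfl⟩)) (hleaf (some (Sum.inl r₁)))
    · have : ∀ u, ¬ T₁.arc v u := by
        intro u harc
        exact hleaf (some (Sum.inl u)) (Or.inl ⟨v, u, harc, rfl, rfl⟩)
      exact h₁.leaf_labeled v hv this
    · have : ∀ u, ¬ T₂.arc w u := by
        intro u harc
        exact hleaf (some (Sum.inr u)) (Or.inr (Or.inl ⟨w, u, harc, rfl, rfl⟩))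
      exact h₂.leaf_labeled w hw this

lemma disj_wte1 : IsWTE T₁ (disjTree T₁ T₂ r₁ r₂) (fun v => some (Sum.inl v)) := by
  refine ⟨fun v hv => Or.inr (Or.inl ⟨v, hv, rfl⟩),
    fun u _ v _ h => by simpa using h, fun v a h => h, ?_⟩
  intro u hu v hv
  constructor
  · exact disj_path_forward_l
  · intro hp
    obtain ⟨v', hv', hpath⟩ := disj_path_back_l hp u rfl
    have : v' = v := by simpa using hv'.symm
    subst this
    exact hpath

lemma disj_wte2 : IsWTE T₂ (disjTree T₁ T₂ r₁ r₂) (fun w => some (Sum.inr w)) := by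
  refine ⟨fun w hw => Or.inr (Or.inr ⟨w, hw, rfl⟩),
    fun u _ v _ h => by simpa using h, fun w a h => h, ?_⟩
  intro u hu v hv
  constructor
  · exact disj_path_forward_r
  · intro hp
    obtain ⟨v', hv', hpath⟩ := disj_path_back_r hp u rfl
    have : v' = v := by simpa using hv'.symm
    subst this
    exact hpath

end Degenerate

end PreTree
namespace PreTree

section Final

variable {α V W : Type}
variable {T₁ : PreTree α V} {T₂ : PreTree α W}

lemma iii_to_anc (h₁ : T₁.IsATree) (h₂ : T₂.IsATree)
    (hiii : (∀ a ∈ T₁.labelSet ∩ T₂.labelSet, ∃ X : Set α,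
          SmallestContaining (T₁.restrict (T₁.labelSet ∩ T₂.labelSet)).clusterRep a X ∧
          SmallestContaining (T₂.restrict (T₁.labelSet ∩ T₂.labelSet)).clusterRep a X) ∧
       (∀ X ∈ (T₁.restrict (T₁.labelSet ∩ T₂.labelSet)).clusterRep,
          ∀ Y ∈ (T₂.restrict (T₁.labelSet ∩ T₂.labelSet)).clusterRep,
          (X ∩ Y).Nonempty → X ⊆ Y ∨ Y ⊆ X)) :
    AncCompat T₁ T₂ := by
  classical
  have hscl : SclH T₁ T₂ := by
    intro a v w ha hv hw
    obtain ⟨Xs, hs1, hs2⟩ := hiii.1 a ha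
    have e1 := smallest_unique (labeled_smallest h₁ ha hv) hs1
    have e2 := smallest_unique (labeled_smallest h₂ ha hw) hs2
    rw [R1, R2, e1, e2]
  have hcmp : CmpH T₁ T₂ := by
    rintro Y hY Z hZ hne
    rcases hY with hY1 | hY2 <;> rcases hZ with hZ1 | hZ2
    · obtain ⟨u, hu, rfl⟩ := mem_clusterRep_iff.mp hY1
      obtain ⟨u', hu', rfl⟩ := mem_clusterRep_iff.mp hZ1
      obtain ⟨b, hb1, hb2⟩ := hne
      rcases comparable_of_mem_cluster (hR1 h₁) hb1 hb2 with h | h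
      · exact Or.inr (cluster_mono h)
      · exact Or.inl (cluster_mono h)
    · exact hiii.2 Y hY1 Z hZ2 hne
    · rcases hiii.2 Z hZ1 Y hY2 (by obtain ⟨b, hb1, hb2⟩ := hne; exact ⟨b, hb2, hb1⟩)
        with h | h
      · exact Or.inr h
      · exact Or.inl h
    · obtain ⟨u, hu, rfl⟩ := mem_clusterRep_iff.mp hY2
      obtain ⟨u', hu', rfl⟩ := mem_clusterRep_iff.mp hZ2
      obtain ⟨b, hb1, hb2⟩ := hne
      rcases comparable_of_mem_cluster (hR2 h₂) hb1 hb2 with h | h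
      · exact Or.inr (cluster_mono h)
      · exact Or.inl (cluster_mono h)
  by_cases hT1e : T₁.nodes = ∅
  · refine ⟨V ⊕ W, pushTree T₂ Sum.inr (Sum.elim (fun _ => none) T₂.label),
      push_isATree h₂ Sum.inr_injective (fun v => rfl) ?_,
      ⟨Sum.inl, wte_of_empty h₁ hT1e Sum.inl⟩,
      ⟨Sum.inr, push_wte Sum.inr_injective (fun v => rfl)⟩⟩
    rintro (v | w) hx
    · rfl
    · exact absurd rfl (hx w)
  · by_cases hT2e : T₂.nodes = ∅
    · refine ⟨V ⊕ W, pushTree T₁ Sum.inl (Sum.elim T₁.label (fun _ => none)),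
        push_isATree h₁ Sum.inl_injective (fun v => rfl) ?_,
        ⟨Sum.inl, push_wte Sum.inl_injective (fun v => rfl)⟩,
        ⟨Sum.inr, wte_of_empty h₂ hT2e Sum.inr⟩⟩
      rintro (v | w) hx
      · exact absurd rfl (hx v)
      · rfl
    · by_cases hcom : (com T₁ T₂).Nonempty
      · exact ⟨V ⊕ W, glueTree T₁ T₂, glue_isATree h₁ h₂ hscl hcmp hcom,
          ⟨Sum.inl, glue_wte1 h₁ h₂ hscl hcmp⟩,
          ⟨emb2 T₁ T₂, glue_wte2 h₁ h₂ hscl hcmp⟩⟩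
      · have hcom' : T₁.labelSet ∩ T₂.labelSet = ∅ :=
          Set.not_nonempty_iff_eq_empty.mp hcom
        obtain ⟨r₁, hr₁, hroot₁⟩ := h₁.rooted (Set.nonempty_iff_ne_empty.mpr hT1e)
        obtain ⟨r₂, hr₂, hroot₂⟩ := h₂.rooted (Set.nonempty_iff_ne_empty.mpr hT2e)
        exact ⟨Option (V ⊕ W), disjTree T₁ T₂ r₁ r₂,
          disj_isATree h₁ h₂ hcom' hr₁ hroot₁ hr₂ hroot₂,
          ⟨fun v => some (Sum.inl v), disj_wte1⟩,
          ⟨fun w => some (Sum.inr w), disj_wte2⟩⟩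

end Final

end PreTree

/-- For arbitrary 𝒜-trees, ancestral compatibility, local compatibility, and
the joint condition on the cluster representations of the restrictions to the common label
set are all equivalent. -/
theorem stmt17 {α V W : Type} (T₁ : PreTree α V) (T₂ : PreTree α W)
    (h₁ : T₁.IsATree) (h₂ : T₂.IsATree) :
    (PreTree.AncCompat T₁ T₂ ↔ PreTree.LocallyCompatible T₁ T₂) ∧
    (PreTree.LocallyCompatible T₁ T₂ ↔
      ((∀ a ∈ T₁.labelSet ∩ T₂.labelSet, ∃ X : Set α,
          PreTree.SmallestContaining
            (T₁.restrict (T₁.labelSet ∩ T₂.labelSet)).clusterRep a X ∧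
          PreTree.SmallestContaining
            (T₂.restrict (T₁.labelSet ∩ T₂.labelSet)).clusterRep a X) ∧
       (∀ X ∈ (T₁.restrict (T₁.labelSet ∩ T₂.labelSet)).clusterRep,
          ∀ Y ∈ (T₂.restrict (T₁.labelSet ∩ T₂.labelSet)).clusterRep,
          (X ∩ Y).Nonempty → X ⊆ Y ∨ Y ⊆ X))) := by
  constructor
  · constructor
    · exact PreTree.anc_to_loc h₁ h₂
    · intro hl
      exact PreTree.iii_to_anc h₁ h₂ (PreTree.loc_to_iii h₁ h₂ hl)
  · constructor
    · exact PreTree.loc_to_iii h₁ h₂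
    · intro hiii
      exact PreTree.anc_to_loc h₁ h₂ (PreTree.iii_to_anc h₁ h₂ hiii)
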